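/- arXiv:1609.09238 — 5 statements merged into one kernel-verified Lean document; each statement's English description precedes it below -/
import Mathlib

section
/- Suppose that Σ_{n≥1} n^{-2} Θ^4_{⌊e^n⌋} < ∞ and Σ_{n≥1} n^{-2} Δ^4_{⌊e^n⌋} < ∞. Then lim_{n→∞} n^{-1/2} ( K_{⌊e^n⌋} − Σ_{k≥1} 1{⌊e^n⌋ p_k ≥ 1} ) = 0 almost surely. -/
open MeasureTheory ProbabilityTheory Filter Set
open scoped ENNReal NNReal

section OccAux

lemma occ_prod_insert (r : ℕ → ℝ) (k : ℕ) (s : Finset ℕ) :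
    ∏ i ∈ insert k s, r i = (if k ∈ s then 1 else r k) * ∏ i ∈ s, r i := by
  by_cases h : k ∈ s
  · simp [Finset.insert_eq_self.2 h, h]
  · simp [Finset.prod_insert h, h]

lemma occ_inner (L : Finset ℕ) (r : ℕ → ℝ) (hr0 : ∀ k, 0 ≤ r k)
    (s : Finset ℕ) (hcard : s.card ≤ 3) :
    ∑ k ∈ L, ∏ i ∈ insert k s, r i ≤ (∑ i ∈ L, r i + 3) * ∏ i ∈ s, r i := by
  have hps : (0:ℝ) ≤ ∏ i ∈ s, r i := Finset.prod_nonneg fun i _ => hr0 i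
  calc ∑ k ∈ L, ∏ i ∈ insert k s, r i
      = (∑ k ∈ L, if k ∈ s then 1 else r k) * ∏ i ∈ s, r i := by
        rw [Finset.sum_mul]; exact Finset.sum_congr rfl fun k _ => occ_prod_insert r k s
    _ ≤ (∑ i ∈ L, r i + 3) * ∏ i ∈ s, r i := by
        apply mul_le_mul_of_nonneg_right _ hps
        calc ∑ k ∈ L, (if k ∈ s then 1 else r k)
            ≤ ∑ k ∈ L, (r k + if k ∈ s then 1 else 0) := by
              apply Finset.sum_le_sum; intro k _
              by_cases h : k ∈ s <;> simp [h, hr0 k]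
          _ = (∑ i ∈ L, r i) + ∑ k ∈ L, (if k ∈ s then (1:ℝ) else 0) := by
              rw [Finset.sum_add_distrib]
          _ ≤ (∑ i ∈ L, r i) + 3 := by
              gcongr
              rw [Finset.sum_ite_mem, Finset.sum_const, nsmul_eq_mul, mul_one]
              calc ((L ∩ s).card : ℝ) ≤ (s.card : ℝ) :=
                    Nat.cast_le.2 (Finset.card_le_card Finset.inter_subset_right)
                _ ≤ 3 := by exact_mod_cast hcard

lemma occ_comb (L : Finset ℕ) (r : ℕ → ℝ) (hr0 : ∀ k, 0 ≤ r k) :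
    ∑ k4 ∈ L, ∑ k3 ∈ L, ∑ k2 ∈ L, ∑ k1 ∈ L,
      ∏ i ∈ insert k1 (insert k2 (insert k3 {k4})), r i
      ≤ (∑ i ∈ L, r i + 3) ^ 4 := by
  have hm : (0:ℝ) ≤ ∑ i ∈ L, r i := Finset.sum_nonneg fun i _ => hr0 i
  have hm3 : (0:ℝ) ≤ ∑ i ∈ L, r i + 3 := by linarith
  set m : ℝ := ∑ i ∈ L, r i with hmdef
  have card3 : ∀ k2 k3 k4 : ℕ, (insert k2 (insert k3 ({k4} : Finset ℕ))).card ≤ 3 := by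
    intro k2 k3 k4
    calc (insert k2 (insert k3 ({k4} : Finset ℕ))).card
        ≤ (insert k3 ({k4} : Finset ℕ)).card + 1 := Finset.card_insert_le _ _
      _ ≤ ({k4} : Finset ℕ).card + 1 + 1 := by
          have := Finset.card_insert_le k3 ({k4} : Finset ℕ); omega
      _ ≤ 3 := by simp
  calc ∑ k4 ∈ L, ∑ k3 ∈ L, ∑ k2 ∈ L, ∑ k1 ∈ L,
        ∏ i ∈ insert k1 (insert k2 (insert k3 {k4})), r i
      ≤ ∑ k4 ∈ L, ∑ k3 ∈ L, ∑ k2 ∈ L, (m + 3) *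
          ∏ i ∈ insert k2 (insert k3 {k4}), r i := by
        refine Finset.sum_le_sum fun k4 _ => Finset.sum_le_sum fun k3 _ =>
          Finset.sum_le_sum fun k2 _ => ?_
        exact occ_inner L r hr0 _ (card3 k2 k3 k4)
    _ ≤ ∑ k4 ∈ L, ∑ k3 ∈ L, (m + 3) * ((m + 3) *
          ∏ i ∈ insert k3 {k4}, r i) := by
        refine Finset.sum_le_sum fun k4 _ => Finset.sum_le_sum fun k3 _ => ?_
        rw [← Finset.mul_sum]
        apply mul_le_mul_of_nonneg_left _ hm3
        refine occ_inner L r hr0 _ ?_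
        have := Finset.card_insert_le k3 ({k4} : Finset ℕ); simp at this ⊢; omega
    _ ≤ ∑ k4 ∈ L, (m + 3) * ((m + 3) * ((m + 3) * ∏ i ∈ ({k4} : Finset ℕ), r i)) := by
        refine Finset.sum_le_sum fun k4 _ => ?_
        rw [← Finset.mul_sum, ← Finset.mul_sum]
        apply mul_le_mul_of_nonneg_left _ hm3
        apply mul_le_mul_of_nonneg_left _ hm3
        refine occ_inner L r hr0 _ (by simp)
    _ = (m + 3)^3 * ∑ k4 ∈ L, r k4 := by
        rw [← Finset.mul_sum, ← Finset.mul_sum, ← Finset.mul_sum]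
        simp; ring
    _ ≤ (m + 3)^3 * (m + 3) := by
        apply mul_le_mul_of_nonneg_left _ (by positivity)
        rw [← hmdef]; linarith
    _ = (m + 3)^4 := by ring

lemma occ_moment {Ω : Type*} [MeasurableSpace Ω] (μ : Measure Ω) [IsProbabilityMeasure μ]
    (L : Finset ℕ) (C : ℕ → Set Ω) (hC : ∀ k, MeasurableSet (C k))
    (r : ℕ → ℝ) (hr0 : ∀ k, 0 ≤ r k)
    (hP : ∀ S : Finset ℕ, S.Nonempty → S ⊆ L →
      μ (⋂ k ∈ S, C k) ≤ ENNReal.ofReal (∏ k ∈ S, r k)) :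
    ∫⁻ ω, (∑ k ∈ L, (C k).indicator (fun _ => (1:ℝ≥0∞)) ω) ^ 4 ∂μ
      ≤ ENNReal.ofReal ((∑ k ∈ L, r k + 3) ^ 4) := by
  set I : ℕ → Ω → ℝ≥0∞ := fun k => (C k).indicator (fun _ => (1:ℝ≥0∞)) with hI
  have measI : ∀ k, Measurable (I k) := fun k => measurable_const.indicator (hC k)
  have expand : ∀ ω, (∑ k ∈ L, I k ω) ^ 4
      = ∑ k1 ∈ L, ∑ k2 ∈ L, ∑ k3 ∈ L, ∑ k4 ∈ L, I k1 ω * I k2 ω * I k3 ω * I k4 ω := by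
    intro ω
    have h4 : ∀ a : ℝ≥0∞, a ^ 4 = a * a * a * a := fun a => by ring
    rw [h4, Finset.sum_mul_sum, Finset.sum_mul, Finset.sum_mul]
    refine Finset.sum_congr rfl fun k1 _ => ?_
    rw [Finset.sum_mul, Finset.sum_mul]
    refine Finset.sum_congr rfl fun k2 _ => ?_
    rw [Finset.mul_sum, Finset.mul_sum]
    simp_rw [Finset.sum_mul]
    rw [Finset.sum_comm]
  have indprod : ∀ k1 k2 k3 k4 (ω : Ω), I k1 ω * I k2 ω * I k3 ω * I k4 ω
      = (C k1 ∩ (C k2 ∩ (C k3 ∩ C k4))).indicator (fun _ => (1:ℝ≥0∞)) ω := by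
    intro k1 k2 k3 k4 ω
    by_cases h1 : ω ∈ C k1 <;> by_cases h2 : ω ∈ C k2 <;> by_cases h3 : ω ∈ C k3 <;>
      by_cases h4 : ω ∈ C k4 <;> simp [hI, Set.indicator, h1, h2, h3, h4]
  calc ∫⁻ ω, (∑ k ∈ L, I k ω) ^ 4 ∂μ
      = ∑ k1 ∈ L, ∑ k2 ∈ L, ∑ k3 ∈ L, ∑ k4 ∈ L,
          μ (C k1 ∩ (C k2 ∩ (C k3 ∩ C k4))) := by
        simp_rw [expand]
        rw [lintegral_finset_sum _ (fun k1 _ => by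
          exact Finset.measurable_sum _ (fun k2 _ => Finset.measurable_sum _ (fun k3 _ =>
            Finset.measurable_sum _ (fun k4 _ =>
              (((measI k1).mul (measI k2)).mul (measI k3)).mul (measI k4)))))]
        refine Finset.sum_congr rfl fun k1 _ => ?_
        rw [lintegral_finset_sum _ (fun k2 _ => by
          exact Finset.measurable_sum _ (fun k3 _ => Finset.measurable_sum _ (fun k4 _ =>
            (((measI k1).mul (measI k2)).mul (measI k3)).mul (measI k4))))]
        refine Finset.sum_congr rfl fun k2 _ => ?_
        rw [lintegral_finset_sum _ (fun k3 _ => by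
          exact Finset.measurable_sum _ (fun k4 _ =>
            (((measI k1).mul (measI k2)).mul (measI k3)).mul (measI k4)))]
        refine Finset.sum_congr rfl fun k3 _ => ?_
        rw [lintegral_finset_sum _ (fun k4 _ => by exact
            (((measI k1).mul (measI k2)).mul (measI k3)).mul (measI k4))]
        refine Finset.sum_congr rfl fun k4 _ => ?_
        simp_rw [indprod k1 k2 k3 k4]
        exact lintegral_indicator_one
          ((hC k1).inter ((hC k2).inter ((hC k3).inter (hC k4))))
    _ ≤ ∑ k1 ∈ L, ∑ k2 ∈ L, ∑ k3 ∈ L, ∑ k4 ∈ L,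
          ENNReal.ofReal (∏ i ∈ insert k4 (insert k3 (insert k2 {k1})), r i) := by
        refine Finset.sum_le_sum fun k1 h1 => Finset.sum_le_sum fun k2 h2 =>
          Finset.sum_le_sum fun k3 h3 => Finset.sum_le_sum fun k4 h4 => ?_
        have hsub : insert k4 (insert k3 (insert k2 ({k1}:Finset ℕ))) ⊆ L := by
          intro x hx
          simp only [Finset.mem_insert, Finset.mem_singleton] at hx
          rcases hx with rfl|rfl|rfl|rfl <;> assumption
        have hne : (insert k4 (insert k3 (insert k2 ({k1}:Finset ℕ)))).Nonempty :=
          ⟨k4, Finset.mem_insert_self _ _⟩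
        have := hP _ hne hsub
        refine le_trans (le_of_eq ?_) this
        congr 1
        ext x
        simp only [Finset.set_biInter_insert, Finset.set_biInter_singleton,
          Set.mem_inter_iff]
        tauto
    _ ≤ ENNReal.ofReal ((∑ i ∈ L, r i + 3) ^ 4) := by
        have nn : ∀ (s : Finset ℕ), (0:ℝ) ≤ ∏ i ∈ s, r i :=
          fun s => Finset.prod_nonneg fun i _ => hr0 i
        calc ∑ k1 ∈ L, ∑ k2 ∈ L, ∑ k3 ∈ L, ∑ k4 ∈ L,
              ENNReal.ofReal (∏ i ∈ insert k4 (insert k3 (insert k2 {k1})), r i)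
            = ENNReal.ofReal (∑ k1 ∈ L, ∑ k2 ∈ L, ∑ k3 ∈ L, ∑ k4 ∈ L,
              ∏ i ∈ insert k4 (insert k3 (insert k2 {k1})), r i) := by
              rw [ENNReal.ofReal_sum_of_nonneg (fun k1 _ =>
                Finset.sum_nonneg fun _ _ => Finset.sum_nonneg fun _ _ =>
                  Finset.sum_nonneg fun _ _ => nn _)]
              refine Finset.sum_congr rfl fun k1 _ => ?_
              rw [ENNReal.ofReal_sum_of_nonneg (fun k2 _ =>
                Finset.sum_nonneg fun _ _ => Finset.sum_nonneg fun _ _ => nn _)]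
              refine Finset.sum_congr rfl fun k2 _ => ?_
              rw [ENNReal.ofReal_sum_of_nonneg (fun k3 _ =>
                Finset.sum_nonneg fun _ _ => nn _)]
              refine Finset.sum_congr rfl fun k3 _ => ?_
              rw [ENNReal.ofReal_sum_of_nonneg (fun k4 _ => nn _)]
          _ ≤ ENNReal.ofReal ((∑ i ∈ L, r i + 3) ^ 4) :=
              ENNReal.ofReal_le_ofReal (occ_comb L r hr0)

lemma occ_tail {Ω : Type*} [MeasurableSpace Ω] (μ : Measure Ω) [IsProbabilityMeasure μ]
    (L : Finset ℕ) (C : ℕ → Set Ω) (hC : ∀ k, MeasurableSet (C k))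
    (r : ℕ → ℝ)
    (hmom : ∫⁻ ω, (∑ k ∈ L, (C k).indicator (fun _ => (1:ℝ≥0∞)) ω) ^ 4 ∂μ
      ≤ ENNReal.ofReal ((∑ k ∈ L, r k + 3) ^ 4))
    (a : ℝ) (ha : 0 < a) :
    μ {ω | ENNReal.ofReal a ≤ ∑ k ∈ L, (C k).indicator (fun _ => (1:ℝ≥0∞)) ω}
      ≤ ENNReal.ofReal ((∑ k ∈ L, r k + 3) ^ 4 / a ^ 4) := by
  set W : Ω → ℝ≥0∞ := fun ω => ∑ k ∈ L, (C k).indicator (fun _ => (1:ℝ≥0∞)) ω with hW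
  have measW : Measurable W :=
    Finset.measurable_sum _ (fun k _ => measurable_const.indicator (hC k))
  have hset : {ω | ENNReal.ofReal a ≤ W ω} = {ω | (ENNReal.ofReal a) ^ 4 ≤ W ω ^ 4} := by
    ext ω
    simp only [Set.mem_setOf_eq]
    constructor
    · intro h; exact pow_le_pow_left' h 4
    · intro h; by_contra hc; push_neg at hc
      exact absurd h (not_le.2 (ENNReal.pow_lt_pow_left (by norm_num) hc))
  have markov := mul_meas_ge_le_lintegral (μ := μ) (measW.pow_const 4)
    ((ENNReal.ofReal a) ^ 4)
  have hε0 : (ENNReal.ofReal a) ^ 4 ≠ 0 := by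
    simp [pow_eq_zero_iff, ENNReal.ofReal_eq_zero, not_le, ha]
  have hεtop : (ENNReal.ofReal a) ^ 4 ≠ ∞ := by
    exact ENNReal.pow_ne_top ENNReal.ofReal_ne_top
  rw [hset]
  calc μ {ω | (ENNReal.ofReal a) ^ 4 ≤ W ω ^ 4}
      ≤ (∫⁻ ω, W ω ^ 4 ∂μ) / (ENNReal.ofReal a) ^ 4 := by
        rw [ENNReal.le_div_iff_mul_le (Or.inl hε0) (Or.inl hεtop), mul_comm]
        exact markov
    _ ≤ ENNReal.ofReal ((∑ k ∈ L, r k + 3) ^ 4) / (ENNReal.ofReal a) ^ 4 :=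
        ENNReal.div_le_div_right hmom _
    _ = ENNReal.ofReal ((∑ k ∈ L, r k + 3) ^ 4 / a ^ 4) := by
        rw [← ENNReal.ofReal_pow ha.le, ENNReal.ofReal_div_of_pos (by positivity)]

lemma occ_one_sub_sum_le_prod (p : ℕ → ℝ) (hp0 : ∀ k, 0 ≤ p k) (hp1 : ∀ k, p k ≤ 1)
    (S : Finset ℕ) : 1 - ∑ k ∈ S, p k ≤ ∏ k ∈ S, (1 - p k) := by
  classical
  induction S using Finset.induction_on with
  | empty => simp
  | @insert a s ha ih =>
      rw [Finset.sum_insert ha, Finset.prod_insert ha]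
      have h1 : (0:ℝ) ≤ 1 - p a := by linarith [hp1 a]
      have h2 : (0:ℝ) ≤ ∑ k ∈ s, p k := Finset.sum_nonneg fun k _ => hp0 k
      calc 1 - (p a + ∑ k ∈ s, p k) ≤ (1 - p a) * (1 - ∑ k ∈ s, p k) := by nlinarith [hp0 a]
        _ ≤ (1 - p a) * ∏ k ∈ s, (1 - p k) := mul_le_mul_of_nonneg_left ih h1

lemma occ_pre {Ω : Type*} [MeasureSpace Ω] (p : ℕ → ℝ) (hp : ∀ k, 0 ≤ p k)
    (hp1 : HasSum p 1) (g : Ω → ℕ) (hg : Measurable g)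
    (hdist : ∀ k, volume {ω | g ω = k} = ENNReal.ofReal (p k)) (S : Set ℕ) :
    volume (g ⁻¹' S) = ENNReal.ofReal (∑' k, S.indicator p k) := by
  have hU : g ⁻¹' S = ⋃ k : S, g ⁻¹' {(k : ℕ)} := by
    ext ω; simp [Set.mem_iUnion, eq_comm]
  have hdisj : Pairwise (Function.onFun Disjoint fun k : S => g ⁻¹' {(k : ℕ)}) := by
    intro i j hij
    refine Disjoint.preimage g ?_
    simp [Set.disjoint_singleton, Subtype.coe_injective.ne hij]
  rw [hU, measure_iUnion hdisj (fun k => hg (measurableSet_singleton _))]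
  have : ∀ k : S, volume (g ⁻¹' {(k : ℕ)}) = ENNReal.ofReal (p k) := by
    intro k; rw [← hdist k]; rfl
  simp_rw [this]
  rw [← ENNReal.ofReal_tsum_of_nonneg (fun k => hp _) (hp1.summable.subtype _)]
  rw [tsum_subtype S p]

-- counting: per ω, n'
lemma occ_count (p : ℕ → ℝ) (n' : ℕ) (b : ℕ → ℕ) (Lf : Finset ℕ)
    (hLf : ∀ k, k ∈ Lf ↔ 1 ≤ (n' : ℝ) * p k) :
    |(∑' k : ℕ, (if 1 ≤ ((Finset.range n').filter (fun j => b j = k)).card then (1:ℝ) else 0))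
      - ∑' k : ℕ, (if 1 ≤ (n' : ℝ) * p k then (1:ℝ) else 0)|
    ≤ (((Finset.range n').filter (fun j => (n' : ℝ) * p (b j) < 1)).card : ℝ)
      + ((Lf.filter (fun k => ((Finset.range n').filter (fun j => b j = k)).card = 0)).card : ℝ) := by
  classical
  set Zc : ℕ → ℕ := fun k => ((Finset.range n').filter (fun j => b j = k)).card with hZc
  set Af : Finset ℕ := ((Finset.range n').image b).filter (fun k => 1 ≤ Zc k) with hAf
  have hmemAf : ∀ k, k ∈ Af ↔ 1 ≤ Zc k := by
    intro k
    simp only [hAf, Finset.mem_filter, Finset.mem_image, and_iff_right_iff_imp]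
    intro h1
    obtain ⟨j, hj⟩ := Finset.card_pos.1 h1
    simp only [Finset.mem_filter] at hj
    exact ⟨j, hj.1, hj.2⟩
  -- tsum identifications
  have ht1 : ∑' k : ℕ, (if 1 ≤ Zc k then (1:ℝ) else 0) = (Af.card : ℝ) := by
    rw [tsum_eq_sum (s := Af) (fun k hk => by
      simp only [if_neg (fun h => hk ((hmemAf k).2 h))])]
    rw [Finset.sum_congr rfl (fun k hk => if_pos ((hmemAf k).1 hk))]
    simp
  have ht2 : ∑' k : ℕ, (if 1 ≤ (n' : ℝ) * p k then (1:ℝ) else 0) = (Lf.card : ℝ) := by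
    rw [tsum_eq_sum (s := Lf) (fun k hk => by
      simp only [if_neg (fun h => hk ((hLf k).2 h))])]
    rw [Finset.sum_congr rfl (fun k hk => if_pos ((hLf k).1 hk))]
    simp
  rw [ht1, ht2]
  -- card difference identity
  have hcard1 : Af.card + (Lf \ Af).card = (Af \ Lf).card + Lf.card := by
    rw [add_comm, Finset.card_sdiff_add_card, Finset.card_sdiff_add_card, Finset.union_comm]
  -- S bound
  have hS : (Af \ Lf).card ≤
      ((Finset.range n').filter (fun j => (n' : ℝ) * p (b j) < 1)).card := by
    set s' : Finset ℕ := (Finset.range n').filter (fun j => b j ∈ Af \ Lf) with hs'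
    have h1 : s'.card = ∑ k ∈ Af \ Lf, (s'.filter (fun j => b j = k)).card :=
      Finset.card_eq_sum_card_fiberwise (fun j hj => (Finset.mem_filter.1 hj).2)
    have h2 : ∀ k ∈ Af \ Lf, (s'.filter (fun j => b j = k)).card = Zc k := by
      intro k hk
      congr 1
      ext j
      simp only [hs', Finset.mem_filter, Finset.mem_range]
      constructor
      · rintro ⟨⟨hj, _⟩, h⟩; exact ⟨hj, h⟩
      · rintro ⟨hj, h⟩; exact ⟨⟨hj, h ▸ hk⟩, h⟩
    have h3 : (Af \ Lf).card ≤ s'.card := by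
      rw [h1]
      calc (Af \ Lf).card = ∑ _k ∈ Af \ Lf, 1 := by simp
        _ ≤ ∑ k ∈ Af \ Lf, (s'.filter (fun j => b j = k)).card := by
            apply Finset.sum_le_sum
            intro k hk
            rw [h2 k hk]
            exact (hmemAf k).1 (Finset.mem_sdiff.1 hk).1
    refine h3.trans (Finset.card_le_card ?_)
    intro j hj
    simp only [hs', Finset.mem_filter] at hj ⊢
    refine ⟨hj.1, ?_⟩
    have := (Finset.mem_sdiff.1 hj.2).2
    rw [hLf] at this
    linarith [not_le.1 this]
  -- T identification
  have hTset : Lf \ Af = Lf.filter (fun k => Zc k = 0) := by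
    ext k
    simp only [Finset.mem_sdiff, Finset.mem_filter, hmemAf]
    exact and_congr_right (fun _ => by omega)
  have hT : (Lf \ Af).card = (Lf.filter (fun k => Zc k = 0)).card := by rw [hTset]
  rw [abs_le]
  constructor
  · push_cast
    rw [← hT]
    have : (Af.card : ℝ) + (Lf \ Af).card = (Af \ Lf).card + Lf.card := by
      exact_mod_cast hcard1
    have h4 : ((Af \ Lf).card : ℝ) ≥ 0 := by positivity
    have h5 : (((Finset.range n').filter (fun j => (n' : ℝ) * p (b j) < 1)).card : ℝ) ≥ 0 := by
      positivity
    linarith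
  · push_cast
    rw [← hT]
    have : (Af.card : ℝ) + (Lf \ Af).card = (Af \ Lf).card + Lf.card := by
      exact_mod_cast hcard1
    have h6 : ((Af \ Lf).card : ℝ) ≤
        (((Finset.range n').filter (fun j => (n' : ℝ) * p (b j) < 1)).card : ℝ) := by
      exact_mod_cast hS
    have h7 : ((Lf \ Af).card : ℝ) ≥ 0 := by positivity
    linarith

variable {Ω : Type*} [MeasureSpace Ω] [IsProbabilityMeasure (volume : Measure Ω)]
    (p : ℕ → ℝ) (hp : ∀ k, 0 ≤ p k) (hp1 : HasSum p 1)
    (B : ℕ → Ω → ℕ) (hBmeas : ∀ j, Measurable (B j))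
    (hBindep : iIndepFun B volume)
    (hBdist : ∀ j k, volume {ω | B j ω = k} = ENNReal.ofReal (p k))

include hp hp1 hBmeas hBindep hBdist

lemma occ_hP_small (Sm : Set ℕ) (T : Finset ℕ) :
    volume (⋂ j ∈ T, B j ⁻¹' Sm)
      = ENNReal.ofReal (∏ _j ∈ T, (∑' k, Sm.indicator p k)) := by
  rw [hBindep.meas_biInter (fun j _ => ⟨Sm, MeasurableSpace.measurableSet_top, rfl⟩)]
  have : ∀ j, volume (B j ⁻¹' Sm) = ENNReal.ofReal (∑' k, Sm.indicator p k) :=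
    fun j => occ_pre p hp hp1 (B j) (hBmeas j) (hBdist j) Sm
  simp_rw [this, Finset.prod_const]
  rw [ENNReal.ofReal_pow (tsum_nonneg fun k => Set.indicator_nonneg (fun a _ => hp a) k)]

lemma occ_hP_large (hple : ∀ k, p k ≤ 1) (n' : ℕ) (S : Finset ℕ) :
    volume (⋂ k ∈ S, ⋂ j ∈ Finset.range n', B j ⁻¹' ({k}ᶜ : Set ℕ))
      ≤ ENNReal.ofReal (∏ k ∈ S, Real.exp (-((n' : ℝ) * p k))) := by
  have hsS0 : (0:ℝ) ≤ ∑ k ∈ S, p k := Finset.sum_nonneg fun k _ => hp k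
  have hsS1 : ∑ k ∈ S, p k ≤ 1 := by
    rw [← hp1.tsum_eq]
    exact Summable.sum_le_tsum S (fun k _ => hp k) hp1.summable
  have hswap : (⋂ k ∈ S, ⋂ j ∈ Finset.range n', B j ⁻¹' ({k}ᶜ : Set ℕ))
      = ⋂ j ∈ Finset.range n', B j ⁻¹' ((↑S : Set ℕ)ᶜ) := by
    ext ω
    simp only [Set.mem_iInter, Set.mem_preimage, Set.mem_compl_iff,
      Set.mem_singleton_iff, Finset.mem_coe]
    constructor
    · intro h j hj hBj; exact h _ hBj j hj rfl
    · intro h k hk j hj hBj; exact h j hj (hBj ▸ hk)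
  rw [hswap, hBindep.meas_biInter
    (fun j _ => ⟨(↑S : Set ℕ)ᶜ, MeasurableSpace.measurableSet_top, rfl⟩)]
  have hcompl : ∀ j, volume (B j ⁻¹' ((↑S : Set ℕ)ᶜ))
      = ENNReal.ofReal (1 - ∑ k ∈ S, p k) := by
    intro j
    rw [Set.preimage_compl,
      measure_compl (hBmeas j MeasurableSpace.measurableSet_top) (measure_ne_top _ _),
      occ_pre p hp hp1 (B j) (hBmeas j) (hBdist j),
      ← sum_eq_tsum_indicator, measure_univ, ← ENNReal.ofReal_one,
      ← ENNReal.ofReal_sub _ hsS0]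
  simp_rw [hcompl, Finset.prod_const, Finset.card_range]
  rw [← ENNReal.ofReal_pow (by linarith)]
  apply ENNReal.ofReal_le_ofReal
  calc (1 - ∑ k ∈ S, p k) ^ n' ≤ (∏ k ∈ S, (1 - p k)) ^ n' := by
        apply pow_le_pow_left₀ (by linarith) (occ_one_sub_sum_le_prod p hp hple S)
    _ = ∏ k ∈ S, (1 - p k) ^ n' := (Finset.prod_pow _ _ _).symm
    _ ≤ ∏ k ∈ S, Real.exp (-((n' : ℝ) * p k)) := by
        apply Finset.prod_le_prod (fun k _ => pow_nonneg (by linarith [hple k]) _)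
        intro k _
        have h1 : 1 - p k ≤ Real.exp (-(p k)) := by
          have := Real.add_one_le_exp (-(p k)); linarith
        calc (1 - p k) ^ n' ≤ Real.exp (-(p k)) ^ n' :=
              pow_le_pow_left₀ (by linarith [hple k]) h1 n'
          _ = Real.exp (-((n' : ℝ) * p k)) := by
              rw [← Real.exp_nat_mul]; ring_nf

end OccAux
/-- **Lemma 1.** In the infinite occupancy scheme with deterministic probabilities
`(p k)`, where ball `j` falls into box `B j` and `P(B j = k) = p k` independently,
let `Z n k` be the number of the first `n` balls in box `k` and
`K n = #{k : Z n k ≥ 1}` the number of occupied boxes. If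
`∑_{n≥1} n⁻² Θ⌊eⁿ⌋⁴ < ∞` and `∑_{n≥1} n⁻² Δ⌊eⁿ⌋⁴ < ∞`, where
`Θ n = ∑_k e^{-n p k} 1{n p k ≥ 1}` and `Δ n = n ∑_k p k 1{n p k < 1}`, then
`n^{-1/2} (K ⌊eⁿ⌋ - ∑_k 1{⌊eⁿ⌋ p k ≥ 1}) → 0` almost surely. -/
theorem occupancy_as_approximation_by_large_boxes
    {Ω : Type*} [MeasureSpace Ω] [IsProbabilityMeasure (volume : Measure Ω)]
    (p : ℕ → ℝ) (hp : ∀ k, 0 ≤ p k) (hp1 : HasSum p 1)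
    (B : ℕ → Ω → ℕ) (hBmeas : ∀ j, Measurable (B j))
    (hBindep : iIndepFun B volume)
    (hBdist : ∀ j k, volume {ω | B j ω = k} = ENNReal.ofReal (p k))
    (Z : ℕ → ℕ → Ω → ℕ)
    (hZ : ∀ n k ω, Z n k ω = ((Finset.range n).filter (fun j => B j ω = k)).card)
    (K : ℕ → Ω → ℝ)
    (hK : ∀ n ω, K n ω = ∑' k : ℕ, (if 1 ≤ Z n k ω then (1 : ℝ) else 0))
    (Θ Δ : ℕ → ℝ)
    (hΘ : ∀ n, Θ n = ∑' k : ℕ, (if 1 ≤ n * p k then Real.exp (-(n * p k)) else 0))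
    (hΔ : ∀ n, Δ n = n * ∑' k : ℕ, (if n * p k < 1 then p k else 0))
    (hΘsum : Summable fun n : ℕ => ((n : ℝ) ^ 2)⁻¹ * (Θ ⌊Real.exp n⌋₊) ^ 4)
    (hΔsum : Summable fun n : ℕ => ((n : ℝ) ^ 2)⁻¹ * (Δ ⌊Real.exp n⌋₊) ^ 4) :
    ∀ᵐ ω ∂(volume : Measure Ω),
      Tendsto (fun n : ℕ => ((n : ℝ) ^ ((-1 : ℝ) / 2)) *
          (K ⌊Real.exp n⌋₊ ω - ∑' k : ℕ, (if 1 ≤ (⌊Real.exp n⌋₊ : ℝ) * p k then (1 : ℝ) else 0)))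
        atTop (nhds 0) := by
  classical
  have hsum := hp1.summable
  have hple : ∀ k, p k ≤ 1 := fun k => le_hasSum hp1 k (fun j _ => hp j)
  -- small sets and q
  set Sm : ℕ → Set ℕ := fun m => {k | (m : ℝ) * p k < 1} with hSmdef
  set q : ℕ → ℝ := fun m => ∑' k, (Sm m).indicator p k with hqdef
  have hq0 : ∀ m, 0 ≤ q m :=
    fun m => tsum_nonneg (fun k => Set.indicator_nonneg (fun a _ => hp a) k)
  have hΔq : ∀ m : ℕ, Δ m = m * q m := by
    intro m
    rw [hΔ, hqdef]
    congr 1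
    all_goals
      refine tsum_congr fun k => ?_
      by_cases h : (m : ℝ) * p k < 1 <;>
        simp [Set.indicator_apply, hSmdef, Set.mem_setOf_eq, h]
  have hΔ0 : ∀ m : ℕ, 0 ≤ Δ m := fun m => by rw [hΔq]; exact mul_nonneg (Nat.cast_nonneg m) (hq0 m)
  -- large sets are finite
  have hLfin : ∀ m : ℕ, {k | 1 ≤ (m : ℝ) * p k}.Finite := by
    intro m
    have h1 : ∀ᶠ k in Filter.cofinite, p k < 1 / ((m : ℝ) + 1) :=
      hsum.tendsto_cofinite_zero.eventually_lt_const (by positivity)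
    refine (Filter.eventually_cofinite.mp h1).subset ?_
    intro k hk
    simp only [Set.mem_setOf_eq, not_lt] at hk ⊢
    rw [div_le_iff₀ (by positivity)]
    have := hp k
    nlinarith
  set Lf : (m : ℕ) → Finset ℕ := fun m => (hLfin m).toFinset with hLfdef
  have hmemLf : ∀ m k, k ∈ Lf m ↔ 1 ≤ (m : ℝ) * p k := by
    intro m k; rw [hLfdef]; exact (hLfin m).mem_toFinset
  have hΘeq : ∀ m, Θ m = ∑ k ∈ Lf m, Real.exp (-((m : ℝ) * p k)) := by
    intro m
    rw [hΘ, tsum_eq_sum (s := Lf m) (fun k hk => if_neg (fun h => hk ((hmemLf m k).2 h)))]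
    exact Finset.sum_congr rfl fun k hk => if_pos ((hmemLf m k).1 hk)
  have hΘ0 : ∀ m : ℕ, 0 ≤ Θ m := fun m => by rw [hΘeq]; positivity
  -- the counting random variables (ENNReal valued)
  set WS : ℕ → Ω → ℝ≥0∞ := fun m ω =>
    ∑ j ∈ Finset.range m, ((B j) ⁻¹' (Sm m)).indicator (fun _ => (1:ℝ≥0∞)) ω with hWSdef
  set Cb : ℕ → ℕ → Set Ω := fun m k => ⋂ j ∈ Finset.range m, B j ⁻¹' ({k}ᶜ : Set ℕ)
    with hCbdef
  set WT : ℕ → Ω → ℝ≥0∞ := fun m ω =>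
    ∑ k ∈ Lf m, (Cb m k).indicator (fun _ => (1:ℝ≥0∞)) ω with hWTdef
  have hCbmeas : ∀ m k, MeasurableSet (Cb m k) := fun m k =>
    (Finset.range m).measurableSet_biInter
      (fun j _ => hBmeas j MeasurableSpace.measurableSet_top)
  -- tail bounds
  have tailS : ∀ (m : ℕ) (a : ℝ), 0 < a →
      volume {ω | ENNReal.ofReal a ≤ WS m ω} ≤ ENNReal.ofReal ((Δ m + 3) ^ 4 / a ^ 4) := by
    intro m a ha
    have hP : ∀ S : Finset ℕ, S.Nonempty → S ⊆ Finset.range m →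
        volume (⋂ j ∈ S, (B j) ⁻¹' (Sm m)) ≤
          ENNReal.ofReal (∏ _j ∈ S, q m) := fun S _ _ =>
      le_of_eq (occ_hP_small p hp hp1 B hBmeas hBindep hBdist (Sm m) S)
    have hmom := occ_moment volume (Finset.range m) _
      (fun j => hBmeas j MeasurableSpace.measurableSet_top)
      (fun _ => q m) (fun _ => hq0 m) hP
    have htail := occ_tail volume (Finset.range m) _
      (fun j => hBmeas j MeasurableSpace.measurableSet_top)
      (fun _ => q m) hmom a ha
    rw [Finset.sum_const, Finset.card_range, nsmul_eq_mul, ← hΔq m] at htail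
    exact htail
  have tailT : ∀ (m : ℕ) (a : ℝ), 0 < a →
      volume {ω | ENNReal.ofReal a ≤ WT m ω} ≤ ENNReal.ofReal ((Θ m + 3) ^ 4 / a ^ 4) := by
    intro m a ha
    have hP : ∀ S : Finset ℕ, S.Nonempty → S ⊆ Lf m →
        volume (⋂ k ∈ S, Cb m k) ≤
          ENNReal.ofReal (∏ k ∈ S, Real.exp (-((m : ℝ) * p k))) := fun S _ _ =>
      occ_hP_large p hp hp1 B hBmeas hBindep hBdist hple m S
    have hmom := occ_moment volume (Lf m) _ (hCbmeas m)
      (fun k => Real.exp (-((m : ℝ) * p k))) (fun k => (Real.exp_pos _).le) hP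
    have htail := occ_tail volume (Lf m) _ (hCbmeas m)
      (fun k => Real.exp (-((m : ℝ) * p k))) hmom a ha
    rw [← hΘeq m] at htail
    exact htail
  -- identification of WS and WT with counts
  have hWSeq : ∀ m ω, WS m ω =
      (((Finset.range m).filter (fun j => (m : ℝ) * p (B j ω) < 1)).card : ℝ≥0∞) := by
    intro m ω
    rw [hWSdef]
    have h1 : ∀ j, ((B j) ⁻¹' (Sm m)).indicator (fun _ => (1:ℝ≥0∞)) ω
        = if (m : ℝ) * p (B j ω) < 1 then 1 else 0 := by
      intro j
      rw [Set.indicator_apply]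
      simp [hSmdef, Set.mem_setOf_eq]
    simp_rw [h1]
    rw [Finset.sum_boole]
  have hWTeq : ∀ m ω, WT m ω =
      (((Lf m).filter
        (fun k => ((Finset.range m).filter (fun j => B j ω = k)).card = 0)).card : ℝ≥0∞) := by
    intro m ω
    rw [hWTdef]
    have h1 : ∀ k, (Cb m k).indicator (fun _ => (1:ℝ≥0∞)) ω
        = if ((Finset.range m).filter (fun j => B j ω = k)).card = 0 then 1 else 0 := by
      intro k
      rw [Set.indicator_apply]
      have hiff : ω ∈ Cb m k ↔ ((Finset.range m).filter (fun j => B j ω = k)).card = 0 := by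
        rw [hCbdef]
        simp only [Set.mem_iInter, Set.mem_preimage, Set.mem_compl_iff,
          Set.mem_singleton_iff, Finset.card_eq_zero, Finset.filter_eq_empty_iff]
      by_cases h : ω ∈ Cb m k
      · simp [h, hiff.1 h]
      · have hc : ¬ ((Finset.range m).filter (fun j => B j ω = k)).card = 0 :=
          fun hc => h (hiff.2 hc)
        simp [h, hc]
    simp_rw [h1]
    rw [Finset.sum_boole]
  -- counting inequality, pointwise
  have hcount : ∀ (N : ℕ) (ω : Ω),
      |K N ω - ∑' k : ℕ, (if 1 ≤ (N : ℝ) * p k then (1:ℝ) else 0)| ≤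
        (((Finset.range N).filter (fun j => (N : ℝ) * p (B j ω) < 1)).card : ℝ)
        + (((Lf N).filter
            (fun k => ((Finset.range N).filter (fun j => B j ω = k)).card = 0)).card : ℝ) := by
    intro N ω
    have hKeq : K N ω = ∑' k : ℕ,
        (if 1 ≤ ((Finset.range N).filter (fun j => B j ω = k)).card then (1:ℝ) else 0) := by
      rw [hK]
      exact tsum_congr fun k => by rw [hZ]
    rw [hKeq]
    exact occ_count p N (fun j => B j ω) (Lf N) (hmemLf N)
  -- per-index almost sure eventual bound
  have main : ∀ M : ℕ, ∀ᵐ ω ∂(volume : Measure Ω), ∀ᶠ n : ℕ in atTop,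
      |K ⌊Real.exp n⌋₊ ω -
        ∑' k : ℕ, (if 1 ≤ (⌊Real.exp n⌋₊ : ℝ) * p k then (1:ℝ) else 0)|
        ≤ 2 * (1 / ((M : ℝ) + 1)) * Real.sqrt n := by
    intro M
    set ε : ℝ := 1 / ((M : ℝ) + 1) with hεdef
    have hε : 0 < ε := by rw [hεdef]; positivity
    set U : ℕ → Set Ω := fun n =>
      {ω | ENNReal.ofReal (ε * Real.sqrt n) ≤ WS ⌊Real.exp n⌋₊ ω} ∪
      {ω | ENNReal.ofReal (ε * Real.sqrt n) ≤ WT ⌊Real.exp n⌋₊ ω} with hUdef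
    set F : ℕ → ℝ := fun n => if n = 0 then 2 else
      ((Δ ⌊Real.exp n⌋₊ + 3) ^ 4 + (Θ ⌊Real.exp n⌋₊ + 3) ^ 4) / (ε ^ 4 * (n : ℝ) ^ 2)
      with hFdef
    have hF0 : ∀ n, 0 ≤ F n := by
      intro n
      simp only [hFdef]
      by_cases h : n = 0
      · simp [h]
      · rw [if_neg h]
        have h1 := hΔ0 ⌊Real.exp n⌋₊
        have h2 := hΘ0 ⌊Real.exp n⌋₊
        positivity
    have hUb : ∀ n, volume (U n) ≤ ENNReal.ofReal (F n) := by
      intro n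
      by_cases h : n = 0
      · subst h
        simp only [hFdef, if_pos rfl]
        calc volume (U 0) ≤ 1 := prob_le_one
          _ ≤ ENNReal.ofReal 2 := by
              rw [← ENNReal.ofReal_one]
              exact ENNReal.ofReal_le_ofReal one_le_two
      · have hn1 : 1 ≤ n := Nat.one_le_iff_ne_zero.2 h
        have hsq : (0:ℝ) < Real.sqrt n := Real.sqrt_pos.2 (by exact_mod_cast hn1)
        have ha : 0 < ε * Real.sqrt n := by positivity
        have hpow : (ε * Real.sqrt n) ^ 4 = ε ^ 4 * (n : ℝ) ^ 2 := by
          rw [mul_pow]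
          congr 1
          have : (Real.sqrt n) ^ 4 = ((Real.sqrt n) ^ 2) ^ 2 := by ring
          rw [this, Real.sq_sqrt (Nat.cast_nonneg n)]
        calc volume (U n) ≤
            volume {ω | ENNReal.ofReal (ε * Real.sqrt n) ≤ WS ⌊Real.exp n⌋₊ ω}
            + volume {ω | ENNReal.ofReal (ε * Real.sqrt n) ≤ WT ⌊Real.exp n⌋₊ ω} := by
              rw [hUdef]; exact measure_union_le _ _
          _ ≤ ENNReal.ofReal ((Δ ⌊Real.exp n⌋₊ + 3) ^ 4 / (ε * Real.sqrt n) ^ 4)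
            + ENNReal.ofReal ((Θ ⌊Real.exp n⌋₊ + 3) ^ 4 / (ε * Real.sqrt n) ^ 4) :=
              add_le_add (tailS _ _ ha) (tailT _ _ ha)
          _ = ENNReal.ofReal ((Δ ⌊Real.exp n⌋₊ + 3) ^ 4 / (ε * Real.sqrt n) ^ 4
              + (Θ ⌊Real.exp n⌋₊ + 3) ^ 4 / (ε * Real.sqrt n) ^ 4) := by
              rw [ENNReal.ofReal_add (by positivity) (by positivity)]
          _ = ENNReal.ofReal (F n) := by
              simp only [hFdef]
              rw [if_neg h, hpow, ← add_div]
    -- summability of F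
    have key34 : ∀ x : ℝ, 0 ≤ x → (x + 3) ^ 4 ≤ 16 * x ^ 4 + 1296 := by
      intro x hx
      rcases le_total x 3 with hh | hh
      · have h1 : (x + 3) ^ 4 ≤ 6 ^ 4 := pow_le_pow_left₀ (by linarith) (by linarith) 4
        have h2 : (0:ℝ) ≤ x ^ 4 := by positivity
        norm_num at h1
        linarith
      · have h1 : (x + 3) ^ 4 ≤ (2 * x) ^ 4 := pow_le_pow_left₀ (by linarith) (by linarith) 4
        have h2 : (2 * x) ^ 4 = 16 * x ^ 4 := by ring
        linarith
    have hFsum : Summable F := by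
      set G : ℕ → ℝ := fun n => (if n = 0 then (2:ℝ) else 0) +
        (ε ^ 4)⁻¹ * (16 * (((n : ℝ) ^ 2)⁻¹ * (Δ ⌊Real.exp n⌋₊) ^ 4)
          + 16 * (((n : ℝ) ^ 2)⁻¹ * (Θ ⌊Real.exp n⌋₊) ^ 4)
          + 2592 * ((n : ℝ) ^ 2)⁻¹) with hGdef
      have hGsum : Summable G := by
        apply Summable.add
        · exact summable_of_ne_finset_zero (s := {0}) (fun n hn => by
            simp only [Finset.mem_singleton] at hn
            simp [hn])
        · apply Summable.mul_left
          apply Summable.add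
          apply Summable.add
          · exact hΔsum.mul_left 16
          · exact hΘsum.mul_left 16
          · exact (Real.summable_nat_pow_inv.2 one_lt_two).mul_left 2592
      refine Summable.of_nonneg_of_le hF0 (fun n => ?_) hGsum
      by_cases h : n = 0
      · subst h
        simp only [hFdef, hGdef, if_pos rfl]
        norm_num
      · have hn1 : 1 ≤ n := Nat.one_le_iff_ne_zero.2 h
        have hn2 : (0:ℝ) < (n : ℝ) ^ 2 := by
          have : (1:ℝ) ≤ (n:ℝ) := by exact_mod_cast hn1
          positivity
        have h1 := hΔ0 ⌊Real.exp n⌋₊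
        have h2 := hΘ0 ⌊Real.exp n⌋₊
        simp only [hFdef, hGdef]
        rw [if_neg h, if_neg h]
        have heq : ((Δ ⌊Real.exp n⌋₊ + 3) ^ 4 + (Θ ⌊Real.exp n⌋₊ + 3) ^ 4)
            / (ε ^ 4 * (n : ℝ) ^ 2)
            = (ε ^ 4)⁻¹ * (((n : ℝ) ^ 2)⁻¹ *
              ((Δ ⌊Real.exp n⌋₊ + 3) ^ 4 + (Θ ⌊Real.exp n⌋₊ + 3) ^ 4)) := by
          field_simp
        rw [heq, zero_add]
        apply mul_le_mul_of_nonneg_left _ (by positivity)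
        have hb : ((n : ℝ) ^ 2)⁻¹ * ((Δ ⌊Real.exp n⌋₊ + 3) ^ 4 + (Θ ⌊Real.exp n⌋₊ + 3) ^ 4)
            ≤ ((n : ℝ) ^ 2)⁻¹ * ((16 * (Δ ⌊Real.exp n⌋₊) ^ 4 + 1296)
              + (16 * (Θ ⌊Real.exp n⌋₊) ^ 4 + 1296)) := by
          apply mul_le_mul_of_nonneg_left _ (by positivity)
          exact add_le_add (key34 _ h1) (key34 _ h2)
        calc ((n : ℝ) ^ 2)⁻¹ * ((Δ ⌊Real.exp n⌋₊ + 3) ^ 4 + (Θ ⌊Real.exp n⌋₊ + 3) ^ 4)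
            ≤ ((n : ℝ) ^ 2)⁻¹ * ((16 * (Δ ⌊Real.exp n⌋₊) ^ 4 + 1296)
              + (16 * (Θ ⌊Real.exp n⌋₊) ^ 4 + 1296)) := hb
          _ = 16 * (((n : ℝ) ^ 2)⁻¹ * (Δ ⌊Real.exp n⌋₊) ^ 4)
              + 16 * (((n : ℝ) ^ 2)⁻¹ * (Θ ⌊Real.exp n⌋₊) ^ 4)
              + 2592 * ((n : ℝ) ^ 2)⁻¹ := by ring
    -- Borel-Cantelli
    have hBC : (∑' n, volume (U n)) ≠ ∞ := by
      have h1 : (∑' n, volume (U n)) ≤ ∑' n, ENNReal.ofReal (F n) :=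
        ENNReal.tsum_le_tsum hUb
      have h2 : (∑' n, ENNReal.ofReal (F n)) = ENNReal.ofReal (∑' n, F n) :=
        (ENNReal.ofReal_tsum_of_nonneg hF0 hFsum).symm
      rw [h2] at h1
      exact ne_top_of_le_ne_top ENNReal.ofReal_ne_top h1
    have hae := ae_eventually_notMem hBC
    filter_upwards [hae] with ω hω
    filter_upwards [hω, eventually_ge_atTop 1] with n hn hn1
    have hsq : (0:ℝ) < Real.sqrt n := Real.sqrt_pos.2 (by exact_mod_cast hn1)
    have ha : 0 < ε * Real.sqrt n := by positivity
    rw [hUdef] at hn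
    simp only [Set.mem_union, Set.mem_setOf_eq, not_or, not_le] at hn
    obtain ⟨hS, hT⟩ := hn
    rw [hWSeq] at hS
    rw [hWTeq] at hT
    have hSr : ((((Finset.range ⌊Real.exp n⌋₊).filter
        (fun j => (⌊Real.exp n⌋₊ : ℝ) * p (B j ω) < 1)).card : ℝ)) < ε * Real.sqrt n := by
      have := hS
      rw [← ENNReal.ofReal_natCast] at this
      exact (ENNReal.ofReal_lt_ofReal_iff ha).1 this
    have hTr : ((((Lf ⌊Real.exp n⌋₊).filter
        (fun k => ((Finset.range ⌊Real.exp n⌋₊).filter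
          (fun j => B j ω = k)).card = 0)).card : ℝ)) < ε * Real.sqrt n := by
      have := hT
      rw [← ENNReal.ofReal_natCast] at this
      exact (ENNReal.ofReal_lt_ofReal_iff ha).1 this
    calc |K ⌊Real.exp n⌋₊ ω -
        ∑' k : ℕ, (if 1 ≤ (⌊Real.exp n⌋₊ : ℝ) * p k then (1:ℝ) else 0)|
        ≤ _ + _ := hcount ⌊Real.exp n⌋₊ ω
      _ ≤ ε * Real.sqrt n + ε * Real.sqrt n := add_le_add hSr.le hTr.le
      _ = 2 * ε * Real.sqrt n := by ring
  -- combine and conclude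
  filter_upwards [ae_all_iff.2 main] with ω hω
  rw [NormedAddCommGroup.tendsto_nhds_zero]
  intro δ hδ
  obtain ⟨M, hM⟩ := exists_nat_gt (2 / δ)
  have hM2 : 2 * (1 / ((M : ℝ) + 1)) < δ := by
    have hδ' : 0 < δ := hδ
    rw [div_lt_iff₀ hδ'] at hM
    rw [mul_one_div, div_lt_iff₀ (by positivity)]
    nlinarith
  filter_upwards [hω M, eventually_ge_atTop 1] with n hn hn1
  have hsq : (0:ℝ) < Real.sqrt n := Real.sqrt_pos.2 (by exact_mod_cast hn1)
  have hrpow : ((n : ℝ) ^ ((-1 : ℝ) / 2)) = (Real.sqrt n)⁻¹ := by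
    rw [neg_div, Real.rpow_neg (Nat.cast_nonneg n), Real.sqrt_eq_rpow]
  rw [Real.norm_eq_abs, abs_mul, hrpow, abs_of_nonneg (by positivity : (0:ℝ) ≤ (Real.sqrt n)⁻¹)]
  calc (Real.sqrt n)⁻¹ *
      |K ⌊Real.exp n⌋₊ ω - ∑' k : ℕ, (if 1 ≤ (⌊Real.exp n⌋₊ : ℝ) * p k then (1:ℝ) else 0)|
      ≤ (Real.sqrt n)⁻¹ * (2 * (1 / ((M : ℝ) + 1)) * Real.sqrt n) := by
        apply mul_le_mul_of_nonneg_left hn (by positivity)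
    _ = 2 * (1 / ((M : ℝ) + 1)) * ((Real.sqrt n)⁻¹ * Real.sqrt n) := by ring
    _ = 2 * (1 / ((M : ℝ) + 1)) := by rw [inv_mul_cancel₀ (ne_of_gt hsq), mul_one]
    _ < δ := hM2
end

section
/- For every n ∈ ℕ, E ( Σ_{k≥1} 1{Z_{n,k} = 0} 1{n p_k ≥ 1} )^4 ≤ Θ_n + 7 Θ_n² + 6 Θ_n³ + Θ_n⁴. -/
open MeasureTheory ProbabilityTheory Filter Set

namespace FourthMomentAux

/-- bounding polynomial: `H 0 s = 1`, `H (m+1) s = s * H m s + θ * H m (s+1)`. -/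
def Hpoly (θ : ℝ) : ℕ → ℝ → ℝ
  | 0, _ => 1
  | m + 1, s => s * Hpoly θ m s + θ * Hpoly θ m (s + 1)

lemma Hpoly_nonneg {θ : ℝ} (hθ : 0 ≤ θ) : ∀ (m : ℕ) (s : ℝ), 0 ≤ s → 0 ≤ Hpoly θ m s
  | 0, _, _ => zero_le_one
  | m + 1, s, hs => by
      have h1 := Hpoly_nonneg hθ m s hs
      have h2 := Hpoly_nonneg hθ m (s + 1) (by linarith)
      show 0 ≤ s * Hpoly θ m s + θ * Hpoly θ m (s + 1)
      have := mul_nonneg hs h1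
      have := mul_nonneg hθ h2
      linarith

lemma Hpoly_four (θ : ℝ) : Hpoly θ 4 0 = θ + 7 * θ ^ 2 + 6 * θ ^ 3 + θ ^ 4 := by
  have h0 : ∀ s : ℝ, Hpoly θ 0 s = 1 := fun _ => rfl
  have h : ∀ (m : ℕ) (s : ℝ),
      Hpoly θ (m + 1) s = s * Hpoly θ m s + θ * Hpoly θ m (s + 1) := fun _ _ => rfl
  have e1 : ∀ s : ℝ, Hpoly θ 1 s = s + θ := by
    intro s; rw [show (1 : ℕ) = 0 + 1 from rfl, h, h0, h0]; ring
  have e2 : ∀ s : ℝ, Hpoly θ 2 s = s * (s + θ) + θ * ((s + 1) + θ) := by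
    intro s; rw [show (2 : ℕ) = 1 + 1 from rfl, h, e1, e1]
  have e3 : ∀ s : ℝ, Hpoly θ 3 s =
      s * (s * (s + θ) + θ * ((s + 1) + θ)) +
        θ * ((s + 1) * ((s + 1) + θ) + θ * ((s + 2) + θ)) := by
    intro s; rw [show (3 : ℕ) = 2 + 1 from rfl, h, e2, e2]; ring
  have h4 : Hpoly θ 4 0 = (0 : ℝ) * Hpoly θ 3 0 + θ * Hpoly θ 3 (0 + 1) := rfl
  rw [h4, e3, e3]; ring

/-- The accumulating sum: `Q 0 T = 1`,
`Q (m+1) T = ∑ a ∈ F, (if a ∈ T then 1 else f a) * Q m (insert a T)`. -/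
def Qfun (f : ℕ → ℝ) (F : Finset ℕ) : ℕ → Finset ℕ → ℝ
  | 0, _ => 1
  | m + 1, T => ∑ a ∈ F, (if a ∈ T then (1 : ℝ) else f a) * Qfun f F m (insert a T)

lemma Qfun_le {f : ℕ → ℝ} {F : Finset ℕ} (hf : ∀ k, 0 ≤ f k) :
    ∀ (m : ℕ) (T : Finset ℕ), Qfun f F m T ≤ Hpoly (∑ k ∈ F, f k) m (T.card : ℝ) := by
  intro m
  set θ := ∑ k ∈ F, f k with hθdef
  have hθ : 0 ≤ θ := Finset.sum_nonneg fun k _ => hf k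
  induction m with
  | zero => intro T; exact le_refl 1
  | succ m ih =>
      intro T
      have step1 : Qfun f F (m + 1) T ≤
          ∑ a ∈ F, (if a ∈ T then Hpoly θ m (T.card : ℝ)
            else f a * Hpoly θ m ((T.card : ℝ) + 1)) := by
        show (∑ a ∈ F, (if a ∈ T then (1 : ℝ) else f a) * Qfun f F m (insert a T)) ≤ _
        refine Finset.sum_le_sum fun a _ => ?_
        by_cases ha : a ∈ T
        · rw [if_pos ha, if_pos ha, one_mul, Finset.insert_eq_self.2 ha]
          exact ih T
        · rw [if_neg ha, if_neg ha]
          refine mul_le_mul_of_nonneg_left ?_ (hf a)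
          have := ih (insert a T)
          rwa [Finset.card_insert_of_notMem ha, Nat.cast_add, Nat.cast_one] at this
      have step2 : (∑ a ∈ F, (if a ∈ T then Hpoly θ m (T.card : ℝ)
            else f a * Hpoly θ m ((T.card : ℝ) + 1)))
          ≤ (T.card : ℝ) * Hpoly θ m (T.card : ℝ) + θ * Hpoly θ m ((T.card : ℝ) + 1) := by
        rw [Finset.sum_ite]
        have hH1 : 0 ≤ Hpoly θ m (T.card : ℝ) := Hpoly_nonneg hθ m _ (Nat.cast_nonneg _)
        have hH2 : 0 ≤ Hpoly θ m ((T.card : ℝ) + 1) := by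
          have := Hpoly_nonneg hθ m ((T.card : ℝ) + 1) (by positivity)
          exact this
        have hc1 : (∑ _x ∈ F.filter (· ∈ T), Hpoly θ m (T.card : ℝ))
            ≤ (T.card : ℝ) * Hpoly θ m (T.card : ℝ) := by
          rw [Finset.sum_const, nsmul_eq_mul]
          refine mul_le_mul_of_nonneg_right ?_ hH1
          have hsub : F.filter (· ∈ T) ⊆ T := fun x hx => (Finset.mem_filter.1 hx).2
          exact_mod_cast Nat.cast_le.2 (Finset.card_le_card hsub)
        have hc2 : (∑ a ∈ F.filter (¬ · ∈ T), f a * Hpoly θ m ((T.card : ℝ) + 1))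
            ≤ θ * Hpoly θ m ((T.card : ℝ) + 1) := by
          rw [← Finset.sum_mul]
          refine mul_le_mul_of_nonneg_right ?_ hH2
          exact Finset.sum_le_sum_of_subset_of_nonneg (Finset.filter_subset _ _)
            fun k _ _ => hf k
        linarith
      calc Qfun f F (m + 1) T ≤ _ := step1
        _ ≤ _ := step2
        _ = Hpoly θ (m + 1) (T.card : ℝ) := rfl

lemma prod_ins (f : ℕ → ℝ) (x : ℕ) (S : Finset ℕ) :
    (∏ k ∈ insert x S, f k) = (if x ∈ S then 1 else f x) * ∏ k ∈ S, f k := by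
  split_ifs with h
  · rw [Finset.insert_eq_self.2 h, one_mul]
  · exact Finset.prod_insert h

lemma Qfun_four (f : ℕ → ℝ) (F : Finset ℕ) (T : Finset ℕ) :
    Qfun f F 4 T = ∑ a ∈ F, (if a ∈ T then (1 : ℝ) else f a) *
      ∑ b ∈ F, (if b ∈ insert a T then (1 : ℝ) else f b) *
      ∑ c ∈ F, (if c ∈ insert b (insert a T) then (1 : ℝ) else f c) *
      ∑ d ∈ F, (if d ∈ insert c (insert b (insert a T)) then (1 : ℝ) else f d) * 1 := rfl

lemma quad_sum_le {f : ℕ → ℝ} (hf : ∀ k, 0 ≤ f k) (F : Finset ℕ) :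
    (∑ a ∈ F, ∑ b ∈ F, ∑ c ∈ F, ∑ d ∈ F,
        (∏ k ∈ insert d (insert c (insert b ({a} : Finset ℕ))), f k))
      ≤ (∑ k ∈ F, f k) + 7 * (∑ k ∈ F, f k) ^ 2 + 6 * (∑ k ∈ F, f k) ^ 3
        + (∑ k ∈ F, f k) ^ 4 := by
  have key : (∑ a ∈ F, ∑ b ∈ F, ∑ c ∈ F, ∑ d ∈ F,
      (∏ k ∈ insert d (insert c (insert b ({a} : Finset ℕ))), f k)) = Qfun f F 4 ∅ := by
    rw [Qfun_four]
    refine Finset.sum_congr rfl fun a _ => ?_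
    rw [Finset.mul_sum]
    refine Finset.sum_congr rfl fun b _ => ?_
    rw [Finset.mul_sum, Finset.mul_sum]
    refine Finset.sum_congr rfl fun c _ => ?_
    rw [Finset.mul_sum, Finset.mul_sum, Finset.mul_sum]
    refine Finset.sum_congr rfl fun d _ => ?_
    rw [prod_ins, prod_ins, prod_ins, Finset.prod_singleton]
    simp only [Finset.notMem_empty, if_false, Finset.mem_insert,
      Finset.mem_singleton, or_false, mul_one]
    ring
  rw [key]
  have := Qfun_le (F := F) hf 4 (∅ : Finset ℕ)
  rw [Finset.card_empty, Nat.cast_zero, Hpoly_four] at this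
  exact this

end FourthMomentAux

open FourthMomentAux

/-- In the infinite occupancy scheme with deterministic probabilities `(p k)`,
for every `n`,
`𝔼 (∑_k 1{Z n k = 0} 1{n p k ≥ 1})⁴ ≤ Θ n + 7 Θ n ² + 6 Θ n ³ + Θ n ⁴`,
where `Θ n = ∑_k e^{-n p k} 1{n p k ≥ 1}`. -/
theorem fourth_moment_empty_large_boxes
    {Ω : Type*} [MeasureSpace Ω] [IsProbabilityMeasure (volume : Measure Ω)]
    (p : ℕ → ℝ) (hp : ∀ k, 0 ≤ p k) (hp1 : HasSum p 1)
    (B : ℕ → Ω → ℕ) (hBmeas : ∀ j, Measurable (B j))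
    (hBindep : iIndepFun B volume)
    (hBdist : ∀ j k, volume {ω | B j ω = k} = ENNReal.ofReal (p k))
    (Z : ℕ → ℕ → Ω → ℕ)
    (hZ : ∀ n k ω, Z n k ω = ((Finset.range n).filter (fun j => B j ω = k)).card)
    (Θ : ℕ → ℝ)
    (hΘ : ∀ n, Θ n = ∑' k : ℕ, (if 1 ≤ n * p k then Real.exp (-(n * p k)) else 0))
    (n : ℕ) :
    ∫⁻ ω, ENNReal.ofReal
        ((∑' k : ℕ, (if Z n k ω = 0 ∧ 1 ≤ n * p k then (1 : ℝ) else 0)) ^ 4) ∂volume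
      ≤ ENNReal.ofReal (Θ n + 7 * Θ n ^ 2 + 6 * Θ n ^ 3 + Θ n ^ 4) := by
  classical
  -- the set of "large" boxes is finite
  have hfin : {k : ℕ | 1 ≤ (n : ℝ) * p k}.Finite := by
    by_cases hn : n = 0
    · subst hn
      have : {k : ℕ | 1 ≤ ((0 : ℕ) : ℝ) * p k} = ∅ := by
        ext k; simp
      rw [this]; exact Set.finite_empty
    · have hn' : (0 : ℝ) < (n : ℝ) := by
        exact_mod_cast Nat.pos_of_ne_zero hn
      have htend : Tendsto p atTop (nhds 0) := hp1.summable.tendsto_atTop_zero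
      have hev : ∀ᶠ k in atTop, p k < 1 / n :=
        htend.eventually (Filter.Tendsto.eventually_lt_const (by positivity) tendsto_id)
      rw [← Nat.cofinite_eq_atTop, eventually_cofinite] at hev
      refine hev.subset fun k hk => ?_
      simp only [Set.mem_setOf_eq] at hk
      show ¬ p k < 1 / (n : ℝ)
      rw [not_lt, div_le_iff₀ hn']
      nlinarith [hk]
  set F : Finset ℕ := hfin.toFinset with hFdef
  have hF : ∀ k, k ∈ F ↔ 1 ≤ (n : ℝ) * p k := by
    intro k; rw [hFdef, Set.Finite.mem_toFinset]; rfl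
  set f : ℕ → ℝ := fun k => Real.exp (-((n : ℝ) * p k)) with hfdef
  have hf : ∀ k, 0 ≤ f k := fun k => (Real.exp_pos _).le
  set θ : ℝ := ∑ k ∈ F, f k with hθdef
  have hΘn : Θ n = θ := by
    rw [hΘ n, tsum_eq_sum (s := F) (f := fun k => if 1 ≤ (n : ℝ) * p k
      then Real.exp (-((n : ℝ) * p k)) else 0)
      (fun k hk => if_neg fun h => hk ((hF k).2 h))]
    exact Finset.sum_congr rfl fun k hk => if_pos ((hF k).1 hk)
  -- events
  have hZzero : ∀ k ω, Z n k ω = 0 ↔ ∀ j ∈ Finset.range n, ¬ B j ω = k := by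
    intro k ω
    rw [hZ, Finset.card_eq_zero, Finset.filter_eq_empty_iff]
  set Ev : Finset ℕ → Set Ω :=
    fun T => ⋂ j ∈ Finset.range n, (B j) ⁻¹' ((↑T : Set ℕ)ᶜ) with hEvdef
  have hEvmeas : ∀ T : Finset ℕ, MeasurableSet (Ev T) := by
    intro T
    exact MeasurableSet.biInter (Finset.range n).countable_toSet
      fun j _ => (hBmeas j) (MeasurableSet.of_discrete)
  -- probability of the event
  have hq0 : ∀ T : Finset ℕ, (0 : ℝ) ≤ ∑ k ∈ T, p k :=
    fun T => Finset.sum_nonneg fun k _ => hp k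
  have hq1 : ∀ T : Finset ℕ, (∑ k ∈ T, p k) ≤ 1 :=
    fun T => sum_le_hasSum T (fun k _ => hp k) hp1
  have hmeasprob : ∀ T : Finset ℕ,
      volume (Ev T) = ENNReal.ofReal ((1 - ∑ k ∈ T, p k) ^ n) := by
    intro T
    have hBj : ∀ j, volume ((B j) ⁻¹' ((↑T : Set ℕ)ᶜ))
        = ENNReal.ofReal (1 - ∑ k ∈ T, p k) := by
      intro j
      have hT : volume ((B j) ⁻¹' (↑T : Set ℕ)) = ENNReal.ofReal (∑ k ∈ T, p k) := by
        have hun : (B j) ⁻¹' (↑T : Set ℕ) = ⋃ k ∈ T, {ω | B j ω = k} := by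
          ext ω
          simp [Set.mem_preimage, Finset.mem_coe]
        have hm : ∀ k ∈ T, MeasurableSet {ω | B j ω = k} := by
          intro k _
          have he : {ω | B j ω = k} = B j ⁻¹' {k} := rfl
          rw [he]; exact hBmeas j MeasurableSet.of_discrete
        have hd : (↑T : Set ℕ).PairwiseDisjoint (fun k => {ω | B j ω = k}) := by
          intro k _ l _ hkl
          refine Set.disjoint_left.2 fun ω h1 h2 => hkl ?_
          simp only [Set.mem_setOf_eq] at h1 h2
          rw [← h1, ← h2]
        have hsum : (∑ k ∈ T, volume {ω | B j ω = k}) = ENNReal.ofReal (∑ k ∈ T, p k) := by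
          rw [ENNReal.ofReal_sum_of_nonneg fun k _ => hp k]
          exact Finset.sum_congr rfl fun k _ => hBdist j k
        rw [hun, measure_biUnion_finset hd hm, hsum]
      rw [Set.preimage_compl, measure_compl ((hBmeas j) MeasurableSet.of_discrete)
        (measure_ne_top _ _), hT, measure_univ,
        ENNReal.ofReal_sub 1 (hq0 T), ENNReal.ofReal_one]
    rw [hEvdef]
    rw [hBindep.meas_biInter (S := Finset.range n)
      (fun j _ => ⟨(↑T : Set ℕ)ᶜ, MeasurableSet.of_discrete, rfl⟩)]
    rw [Finset.prod_congr rfl fun j _ => hBj j, Finset.prod_const, Finset.card_range,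
      ← ENNReal.ofReal_pow (by linarith [hq1 T])]
  -- the exponential bound on the probability
  have hproble : ∀ T : Finset ℕ,
      volume (Ev T) ≤ ENNReal.ofReal (∏ k ∈ T, f k) := by
    intro T
    rw [hmeasprob T]
    refine ENNReal.ofReal_le_ofReal ?_
    set q : ℝ := ∑ k ∈ T, p k with hqdef
    have h1 : 1 - q ≤ Real.exp (-q) := by
      have := Real.add_one_le_exp (-q); linarith
    calc (1 - q) ^ n ≤ (Real.exp (-q)) ^ n :=
          pow_le_pow_left₀ (by linarith [hq1 T]) h1 n
      _ = Real.exp ((n : ℝ) * (-q)) := (Real.exp_nat_mul _ n).symm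
      _ = ∏ k ∈ T, f k := by
          rw [← Real.exp_sum]
          congr 1
          simp [hqdef, mul_neg, Finset.mul_sum]
  -- the indicator function
  set x : ℕ → Ω → ℝ := fun k ω => if Z n k ω = 0 then 1 else 0 with hxdef
  have hx0 : ∀ k ω, 0 ≤ x k ω := by
    intro k ω; rw [hxdef]; dsimp only; split <;> norm_num
  set T4 : ℕ → ℕ → ℕ → ℕ → Finset ℕ :=
    fun a b c d => insert d (insert c (insert b ({a} : Finset ℕ))) with hT4def
  have hterm : ∀ a b c d : ℕ, ∀ ω : Ω,
      ENNReal.ofReal (x a ω * x b ω * (x c ω * x d ω))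
        = Set.indicator (Ev (T4 a b c d)) (fun _ => (1 : ENNReal)) ω := by
    intro a b c d ω
    have hmem : ω ∈ Ev (T4 a b c d) ↔
        (Z n a ω = 0 ∧ Z n b ω = 0 ∧ Z n c ω = 0 ∧ Z n d ω = 0) := by
      rw [hEvdef, hT4def]
      simp only [Set.mem_iInter, Set.mem_preimage, Set.mem_compl_iff, Finset.coe_insert,
        Set.mem_insert_iff, Finset.coe_singleton, Set.mem_singleton_iff, hZzero]
      constructor
      · intro h
        exact ⟨fun j hj h' => h j hj (Or.inr (Or.inr (Or.inr h'))),
          fun j hj h' => h j hj (Or.inr (Or.inr (Or.inl h'))),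
          fun j hj h' => h j hj (Or.inr (Or.inl h')),
          fun j hj h' => h j hj (Or.inl h')⟩
      · rintro ⟨h1, h2, h3, h4⟩ j hj (h | h | h | h)
        exacts [h4 j hj h, h3 j hj h, h2 j hj h, h1 j hj h]
    by_cases hc : Z n a ω = 0 ∧ Z n b ω = 0 ∧ Z n c ω = 0 ∧ Z n d ω = 0
    · obtain ⟨h1, h2, h3, h4⟩ := hc
      rw [Set.indicator_of_mem (hmem.2 ⟨h1, h2, h3, h4⟩)]
      rw [hxdef]; simp [h1, h2, h3, h4]
    · rw [Set.indicator_of_notMem (fun h => hc (hmem.1 h))]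
      have hz : x a ω * x b ω * (x c ω * x d ω) = 0 := by
        rw [hxdef]; dsimp only
        by_cases h1 : Z n a ω = 0
        · by_cases h2 : Z n b ω = 0
          · by_cases h3 : Z n c ω = 0
            · by_cases h4 : Z n d ω = 0
              · exact absurd ⟨h1, h2, h3, h4⟩ hc
              · simp [h4]
            · simp [h3]
          · simp [h2]
        · simp [h1]
      rw [hz, ENNReal.ofReal_zero]
  have hmeasterm : ∀ a b c d : ℕ,
      Measurable fun ω => ENNReal.ofReal (x a ω * x b ω * (x c ω * x d ω)) := by
    intro a b c d
    have : (fun ω => ENNReal.ofReal (x a ω * x b ω * (x c ω * x d ω)))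
        = Set.indicator (Ev (T4 a b c d)) (fun _ => (1 : ENNReal)) :=
      funext (hterm a b c d)
    rw [this]
    exact measurable_const.indicator (hEvmeas _)
  -- pointwise rewriting of the integrand
  have hpoint : ∀ ω : Ω,
      ENNReal.ofReal ((∑' k : ℕ, (if Z n k ω = 0 ∧ 1 ≤ (n : ℝ) * p k then (1 : ℝ) else 0)) ^ 4)
        = ∑ a ∈ F, ∑ b ∈ F, ∑ c ∈ F, ∑ d ∈ F,
            ENNReal.ofReal (x a ω * x b ω * (x c ω * x d ω)) := by
    intro ω
    have hXsum : (∑' k : ℕ, (if Z n k ω = 0 ∧ 1 ≤ (n : ℝ) * p k then (1 : ℝ) else 0))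
        = ∑ k ∈ F, x k ω := by
      rw [tsum_eq_sum (s := F) (fun k hk => if_neg fun h => hk ((hF k).2 h.2))]
      refine Finset.sum_congr rfl fun k hk => ?_
      rw [hxdef]; dsimp only
      by_cases hz : Z n k ω = 0
      · rw [if_pos ⟨hz, (hF k).1 hk⟩, if_pos hz]
      · rw [if_neg fun h => hz h.1, if_neg hz]
    have hpow : (∑ k ∈ F, x k ω) ^ 4
        = ∑ a ∈ F, ∑ b ∈ F, ∑ c ∈ F, ∑ d ∈ F, x a ω * x b ω * (x c ω * x d ω) := by
      calc (∑ k ∈ F, x k ω) ^ 4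
          = ((∑ a ∈ F, x a ω) * (∑ b ∈ F, x b ω)) *
              ((∑ c ∈ F, x c ω) * (∑ d ∈ F, x d ω)) := by ring
        _ = (∑ a ∈ F, ∑ b ∈ F, x a ω * x b ω) *
              (∑ c ∈ F, ∑ d ∈ F, x c ω * x d ω) := by
            rw [Finset.sum_mul_sum, Finset.sum_mul_sum]
        _ = ∑ a ∈ F, ∑ b ∈ F, ((x a ω * x b ω) *
              (∑ c ∈ F, ∑ d ∈ F, x c ω * x d ω)) := by
            rw [Finset.sum_mul]
            exact Finset.sum_congr rfl fun a _ => Finset.sum_mul _ _ _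
        _ = ∑ a ∈ F, ∑ b ∈ F, ∑ c ∈ F, ∑ d ∈ F, x a ω * x b ω * (x c ω * x d ω) := by
            refine Finset.sum_congr rfl fun a _ => Finset.sum_congr rfl fun b _ => ?_
            rw [Finset.mul_sum]
            exact Finset.sum_congr rfl fun c _ => Finset.mul_sum _ _ _
    rw [hXsum, hpow]
    rw [ENNReal.ofReal_sum_of_nonneg fun a _ => Finset.sum_nonneg fun b _ =>
      Finset.sum_nonneg fun c _ => Finset.sum_nonneg fun d _ =>
        mul_nonneg (mul_nonneg (hx0 a ω) (hx0 b ω)) (mul_nonneg (hx0 c ω) (hx0 d ω))]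
    refine Finset.sum_congr rfl fun a _ => ?_
    rw [ENNReal.ofReal_sum_of_nonneg fun b _ => Finset.sum_nonneg fun c _ =>
      Finset.sum_nonneg fun d _ =>
        mul_nonneg (mul_nonneg (hx0 a ω) (hx0 b ω)) (mul_nonneg (hx0 c ω) (hx0 d ω))]
    refine Finset.sum_congr rfl fun b _ => ?_
    rw [ENNReal.ofReal_sum_of_nonneg fun c _ => Finset.sum_nonneg fun d _ =>
        mul_nonneg (mul_nonneg (hx0 a ω) (hx0 b ω)) (mul_nonneg (hx0 c ω) (hx0 d ω))]
    refine Finset.sum_congr rfl fun c _ => ?_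
    rw [ENNReal.ofReal_sum_of_nonneg fun d _ =>
        mul_nonneg (mul_nonneg (hx0 a ω) (hx0 b ω)) (mul_nonneg (hx0 c ω) (hx0 d ω))]
  -- main computation
  calc ∫⁻ ω, ENNReal.ofReal
        ((∑' k : ℕ, (if Z n k ω = 0 ∧ 1 ≤ (n : ℝ) * p k then (1 : ℝ) else 0)) ^ 4) ∂volume
      = ∫⁻ ω, ∑ a ∈ F, ∑ b ∈ F, ∑ c ∈ F, ∑ d ∈ F,
          ENNReal.ofReal (x a ω * x b ω * (x c ω * x d ω)) ∂volume :=
        lintegral_congr hpoint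
    _ = ∑ a ∈ F, ∑ b ∈ F, ∑ c ∈ F, ∑ d ∈ F,
          ∫⁻ ω, ENNReal.ofReal (x a ω * x b ω * (x c ω * x d ω)) ∂volume := by
        rw [lintegral_finset_sum _ fun a _ => Finset.measurable_sum _ fun b _ =>
          Finset.measurable_sum _ fun c _ => Finset.measurable_sum _ fun d _ =>
            hmeasterm a b c d]
        refine Finset.sum_congr rfl fun a _ => ?_
        rw [lintegral_finset_sum _ fun b _ => Finset.measurable_sum _ fun c _ =>
          Finset.measurable_sum _ fun d _ => hmeasterm a b c d]
        refine Finset.sum_congr rfl fun b _ => ?_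
        rw [lintegral_finset_sum _ fun c _ => Finset.measurable_sum _ fun d _ =>
          hmeasterm a b c d]
        refine Finset.sum_congr rfl fun c _ => ?_
        rw [lintegral_finset_sum _ fun d _ => hmeasterm a b c d]
    _ = ∑ a ∈ F, ∑ b ∈ F, ∑ c ∈ F, ∑ d ∈ F, volume (Ev (T4 a b c d)) := by
        refine Finset.sum_congr rfl fun a _ => Finset.sum_congr rfl fun b _ =>
          Finset.sum_congr rfl fun c _ => Finset.sum_congr rfl fun d _ => ?_
        rw [lintegral_congr (hterm a b c d)]
        exact lintegral_indicator_one (hEvmeas _)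
    _ ≤ ∑ a ∈ F, ∑ b ∈ F, ∑ c ∈ F, ∑ d ∈ F,
          ENNReal.ofReal (∏ k ∈ T4 a b c d, f k) := by
        refine Finset.sum_le_sum fun a _ => Finset.sum_le_sum fun b _ =>
          Finset.sum_le_sum fun c _ => Finset.sum_le_sum fun d _ => hproble _
    _ = ENNReal.ofReal (∑ a ∈ F, ∑ b ∈ F, ∑ c ∈ F, ∑ d ∈ F, ∏ k ∈ T4 a b c d, f k) := by
        rw [ENNReal.ofReal_sum_of_nonneg fun a _ => Finset.sum_nonneg fun b _ =>
          Finset.sum_nonneg fun c _ => Finset.sum_nonneg fun d _ =>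
            Finset.prod_nonneg fun k _ => hf k]
        refine Finset.sum_congr rfl fun a _ => ?_
        rw [ENNReal.ofReal_sum_of_nonneg fun b _ => Finset.sum_nonneg fun c _ =>
          Finset.sum_nonneg fun d _ => Finset.prod_nonneg fun k _ => hf k]
        refine Finset.sum_congr rfl fun b _ => ?_
        rw [ENNReal.ofReal_sum_of_nonneg fun c _ => Finset.sum_nonneg fun d _ =>
          Finset.prod_nonneg fun k _ => hf k]
        refine Finset.sum_congr rfl fun c _ => ?_
        rw [ENNReal.ofReal_sum_of_nonneg fun d _ => Finset.prod_nonneg fun k _ => hf k]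
    _ ≤ ENNReal.ofReal (θ + 7 * θ ^ 2 + 6 * θ ^ 3 + θ ^ 4) :=
        ENNReal.ofReal_le_ofReal (by simpa [hT4def, hθdef] using quad_sum_le hf F)
    _ = ENNReal.ofReal (Θ n + 7 * Θ n ^ 2 + 6 * Θ n ^ 3 + Θ n ^ 4) := by rw [hΘn]
end

section
/- For every n ∈ ℕ, E ( Σ_{k≥1} 1{Z_{n,k} ≥ 1} 1{n p_k < 1} )^4 ≤ Δ_n + 7 Δ_n² + 6 Δ_n³ + Δ_n⁴. -/
open MeasureTheory ProbabilityTheory Filter Set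
open scoped ENNReal

noncomputable def occE (i j : ℕ) : ℝ≥0∞ := if i = j then 1 else 0

lemma occ_key (Q : ℝ≥0∞) (a b c d : ℕ) :
    Q ^ ({a, b, c, d} : Finset ℕ).card ≤
      occE a b * occE b c * occE c d * Q
      + (occE a b * occE b c + occE a b * occE b d + occE a c * occE c d + occE b c * occE c d
         + occE a b * occE c d + occE a c * occE b d + occE a d * occE b c) * Q ^ 2
      + (occE a b + occE a c + occE a d + occE b c + occE b d + occE c d) * Q ^ 3
      + Q ^ 4 := by
  by_cases hab : a = b <;> by_cases hac : a = c <;> by_cases had : a = d <;>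
    by_cases hbc : b = c <;> by_cases hbd : b = d <;> by_cases hcd : c = d <;>
    subst_eqs <;>
    simp_all [occE, Finset.card_insert_of_notMem, Finset.mem_insert, Finset.insert_idem] <;>
    first
      | exact le_self_add
      | exact le_add_right le_self_add
      | exact le_add_right (le_add_right le_self_add)

lemma occ_sum (Q : ℝ≥0∞) (n : ℕ) :
    ∑ a ∈ Finset.range n, ∑ b ∈ Finset.range n, ∑ c ∈ Finset.range n, ∑ d ∈ Finset.range n,
      (occE a b * occE b c * occE c d * Q
      + (occE a b * occE b c + occE a b * occE b d + occE a c * occE c d + occE b c * occE c d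
         + occE a b * occE c d + occE a c * occE b d + occE a d * occE b c) * Q ^ 2
      + (occE a b + occE a c + occE a d + occE b c + occE b d + occE c d) * Q ^ 3
      + Q ^ 4)
    = (n : ℝ≥0∞) * Q + 7 * ((n : ℝ≥0∞) * Q) ^ 2 + 6 * ((n : ℝ≥0∞) * Q) ^ 3
      + ((n : ℝ≥0∞) * Q) ^ 4 := by
  have hA : (∑ x ∈ Finset.range n, ∑ x1 ∈ Finset.range n, ∑ x2 ∈ Finset.range n,
      if x1 ∈ Finset.range n then if x = x2 then Q ^ 2 else 0 else 0)
      = (n : ℝ≥0∞) ^ 2 * Q ^ 2 := by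
    calc (∑ x ∈ Finset.range n, ∑ x1 ∈ Finset.range n, ∑ x2 ∈ Finset.range n,
        if x1 ∈ Finset.range n then if x = x2 then Q ^ 2 else 0 else 0)
        = ∑ x ∈ Finset.range n, ∑ x1 ∈ Finset.range n, ∑ x2 ∈ Finset.range n,
          if x = x2 then Q ^ 2 else 0 := by
          refine Finset.sum_congr rfl fun x _ => Finset.sum_congr rfl fun x1 hx1 =>
            Finset.sum_congr rfl fun x2 _ => by rw [if_pos hx1]
      _ = (n : ℝ≥0∞) ^ 2 * Q ^ 2 := by
          simp only [Finset.sum_ite_eq, Finset.sum_const, Finset.card_range,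
            nsmul_eq_mul, mul_ite, mul_zero, Finset.sum_ite_mem, Finset.inter_self]
          ring
  have hB : (∑ x ∈ Finset.range n, ∑ x1 ∈ Finset.range n, ∑ x2 ∈ Finset.range n,
      ∑ x3 ∈ Finset.range n, if x1 = x2 then if x = x3 then Q ^ 2 else 0 else 0)
      = (n : ℝ≥0∞) ^ 2 * Q ^ 2 := by
    calc (∑ x ∈ Finset.range n, ∑ x1 ∈ Finset.range n, ∑ x2 ∈ Finset.range n,
        ∑ x3 ∈ Finset.range n, if x1 = x2 then if x = x3 then Q ^ 2 else 0 else 0)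
        = ∑ x ∈ Finset.range n, ∑ x1 ∈ Finset.range n, ∑ x3 ∈ Finset.range n,
          ∑ x2 ∈ Finset.range n, if x1 = x2 then if x = x3 then Q ^ 2 else 0 else 0 := by
          exact Finset.sum_congr rfl fun x _ => Finset.sum_congr rfl fun x1 _ =>
            Finset.sum_comm
      _ = (n : ℝ≥0∞) ^ 2 * Q ^ 2 := by
          simp only [Finset.sum_ite_eq]
          exact hA
  simp only [occE, mul_ite, ite_mul, one_mul, mul_one, zero_mul, mul_zero, add_mul,
    Finset.sum_add_distrib, Finset.sum_ite_eq, Finset.sum_ite_eq', Finset.sum_ite_mem,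
    Finset.inter_self, Finset.sum_const, Finset.card_range, nsmul_eq_mul]
  rw [hA, hB]
  ring

lemma occ_expand (f : ℕ → ℝ≥0∞) (s : Finset ℕ) :
    (∑ j ∈ s, f j) ^ 4
      = ∑ a ∈ s, ∑ b ∈ s, ∑ c ∈ s, ∑ d ∈ s, f a * f b * f c * f d := by
  rw [show ((∑ j ∈ s, f j) ^ 4)
      = ((∑ j ∈ s, f j) * (∑ j ∈ s, f j)) * ((∑ j ∈ s, f j) * (∑ j ∈ s, f j)) by ring]
  simp only [Finset.sum_mul_sum]
  refine Finset.sum_congr rfl fun a _ => ?_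
  rw [Finset.sum_comm]
  exact Finset.sum_congr rfl fun b _ => Finset.sum_congr rfl fun c _ =>
    Finset.sum_congr rfl fun d _ => by ring

/-- In the infinite occupancy scheme with deterministic probabilities `(p k)`,
for every `n`,
`𝔼 (∑_k 1{Z n k ≥ 1} 1{n p k < 1})⁴ ≤ Δ n + 7 Δ n ² + 6 Δ n ³ + Δ n ⁴`,
where `Δ n = n ∑_k p k 1{n p k < 1}`. -/
theorem fourth_moment_occupied_small_boxes
    {Ω : Type*} [MeasureSpace Ω] [IsProbabilityMeasure (volume : Measure Ω)]
    (p : ℕ → ℝ) (hp : ∀ k, 0 ≤ p k) (hp1 : HasSum p 1)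
    (B : ℕ → Ω → ℕ) (hBmeas : ∀ j, Measurable (B j))
    (hBindep : iIndepFun B volume)
    (hBdist : ∀ j k, volume {ω | B j ω = k} = ENNReal.ofReal (p k))
    (Z : ℕ → ℕ → Ω → ℕ)
    (hZ : ∀ n k ω, Z n k ω = ((Finset.range n).filter (fun j => B j ω = k)).card)
    (Δ : ℕ → ℝ)
    (hΔ : ∀ n, Δ n = n * ∑' k : ℕ, (if n * p k < 1 then p k else 0))
    (n : ℕ) :
    ∫⁻ ω, ENNReal.ofReal
        ((∑' k : ℕ, (if 1 ≤ Z n k ω ∧ n * p k < 1 then (1 : ℝ) else 0)) ^ 4) ∂volume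
      ≤ ENNReal.ofReal (Δ n + 7 * Δ n ^ 2 + 6 * Δ n ^ 3 + Δ n ^ 4) := by
  classical
  set q : ℝ := ∑' k : ℕ, (if (n : ℝ) * p k < 1 then p k else 0) with hqdef
  have hq0 : 0 ≤ q := tsum_nonneg fun k => by split <;> simp [hp k]
  set Q : ℝ≥0∞ := ENNReal.ofReal q with hQdef
  set A : ℕ → Set Ω := fun j => {ω | (n : ℝ) * p (B j ω) < 1} with hAdef
  have hAm : ∀ j, MeasurableSet (A j) :=
    fun j => (hBmeas j) ((Set.to_countable {k : ℕ | (n : ℝ) * p k < 1}).measurableSet)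
  -- measure of each A j
  have hAQ : ∀ j, volume (A j) = Q := by
    intro j
    have hrw : A j = ⋃ k ∈ {k : ℕ | (n : ℝ) * p k < 1}, B j ⁻¹' {k} := by
      ext ω
      simp only [hAdef, Set.mem_setOf_eq, Set.mem_iUnion, Set.mem_preimage,
        Set.mem_singleton_iff]
      exact ⟨fun h => ⟨B j ω, h, rfl⟩, fun ⟨k, hk, e⟩ => e ▸ hk⟩
    have hdisj : ({k : ℕ | (n : ℝ) * p k < 1}).PairwiseDisjoint (fun k => B j ⁻¹' {k}) :=
      fun k _ l _ hkl => Set.disjoint_left.2 fun ω hk hl => hkl (by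
        simp only [Set.mem_preimage, Set.mem_singleton_iff] at hk hl; rw [← hk, ← hl])
    rw [hrw, measure_biUnion (Set.to_countable _) hdisj
      (fun k _ => hBmeas j (measurableSet_singleton k))]
    have h1 : ∀ k : {k : ℕ | (n : ℝ) * p k < 1},
        volume (B j ⁻¹' {(k : ℕ)}) = ENNReal.ofReal (p k) := fun k => hBdist j k
    calc (∑' k : {k : ℕ | (n : ℝ) * p k < 1}, volume (B j ⁻¹' {(k : ℕ)}))
        = ∑' k : {k : ℕ | (n : ℝ) * p k < 1}, ENNReal.ofReal (p k) := tsum_congr h1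
      _ = ENNReal.ofReal (∑' k : {k : ℕ | (n : ℝ) * p k < 1}, p k) :=
          (ENNReal.ofReal_tsum_of_nonneg
            (f := fun k : {k : ℕ | (n : ℝ) * p k < 1} => p k) (fun k => hp k)
            ((hp1.summable.subtype _ :
              Summable fun k : {k : ℕ | (n : ℝ) * p k < 1} => p k))).symm
      _ = Q := by
          rw [hQdef, hqdef]
          congr 1
          rw [tsum_subtype]
          exact tsum_congr fun k => by simp [Set.indicator_apply]
  -- measure of intersections
  have hInter : ∀ s : Finset ℕ, volume (⋂ j ∈ s, A j) = Q ^ s.card := by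
    intro s
    rw [hBindep.meas_biInter (S := s) (s := A)
      (fun i _ => ⟨{k : ℕ | (n : ℝ) * p k < 1},
        (Set.to_countable _).measurableSet, rfl⟩)]
    simp [hAQ, Finset.prod_const]
  set W : ℕ → Ω → ℝ≥0∞ := fun j => (A j).indicator fun _ => 1 with hWdef
  have hWm : ∀ j, Measurable (W j) := fun j => measurable_const.indicator (hAm j)
  -- pointwise bound
  have hpt : ∀ ω, ENNReal.ofReal
      ((∑' k : ℕ, (if 1 ≤ Z n k ω ∧ (n : ℝ) * p k < 1 then (1 : ℝ) else 0)) ^ 4)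
      ≤ (∑ j ∈ Finset.range n, W j ω) ^ 4 := by
    intro ω
    set f : ℕ → ℝ := fun k => if 1 ≤ Z n k ω ∧ (n : ℝ) * p k < 1 then 1 else 0 with hfdef
    set g : ℕ → ℝ :=
      fun k => ∑ j ∈ Finset.range n, (if B j ω = k ∧ (n : ℝ) * p k < 1 then (1 : ℝ) else 0)
      with hgdef
    have hf0 : ∀ k, 0 ≤ f k := fun k => by simp only [hfdef]; split <;> norm_num
    have hg0 : ∀ k, 0 ≤ g k :=
      fun k => Finset.sum_nonneg fun j _ => by split <;> norm_num
    have hfg : ∀ k, f k ≤ g k := by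
      intro k
      by_cases h : 1 ≤ Z n k ω ∧ (n : ℝ) * p k < 1
      · obtain ⟨j, hj, hbj⟩ : ∃ j ∈ Finset.range n, B j ω = k := by
          have hcard : 0 < ((Finset.range n).filter fun j => B j ω = k).card := by
            rw [← hZ n k ω]; exact h.1
          obtain ⟨j, hj⟩ := Finset.card_pos.mp hcard
          rw [Finset.mem_filter] at hj
          exact ⟨j, hj.1, hj.2⟩
        have hfk : f k = 1 := if_pos h
        rw [hfk]
        calc (1 : ℝ) = if B j ω = k ∧ (n : ℝ) * p k < 1 then (1 : ℝ) else 0 :=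
              (if_pos ⟨hbj, h.2⟩).symm
          _ ≤ g k := by
              simp only [hgdef]
              exact Finset.single_le_sum
                (f := fun j => if B j ω = k ∧ (n : ℝ) * p k < 1 then (1 : ℝ) else 0)
                (fun i _ => by split <;> norm_num) hj
      · have hfk : f k = 0 := if_neg h
        rw [hfk]; exact hg0 k
    have hjs : ∀ j, Summable
        (fun k => if B j ω = k ∧ (n : ℝ) * p k < 1 then (1 : ℝ) else 0) := by
      intro j
      apply summable_of_ne_finset_zero (s := {B j ω})
      intro k hk
      rw [Finset.mem_singleton] at hk
      exact if_neg fun hc => hk hc.1.symm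
    have hgs : Summable g := by
      rw [hgdef]
      exact summable_sum fun j _ => hjs j
    have hfs : Summable f := hgs.of_nonneg_of_le hf0 hfg
    have h1 : (∑' k, f k) ≤ ∑' k, g k := Summable.tsum_le_tsum hfg hfs hgs
    have h2 : (∑' k, g k)
        = ∑ j ∈ Finset.range n, (if (n : ℝ) * p (B j ω) < 1 then (1 : ℝ) else 0) := by
      rw [hgdef, Summable.tsum_finsetSum fun j _ => hjs j]
      refine Finset.sum_congr rfl fun j _ => ?_
      rw [tsum_eq_single (B j ω) (fun k hk => if_neg fun hc => hk hc.1.symm)]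
      simp
    have h3 : 0 ≤ ∑' k, f k := tsum_nonneg hf0
    have hWj : ∀ j, W j ω
        = ENNReal.ofReal (if (n : ℝ) * p (B j ω) < 1 then (1 : ℝ) else 0) := by
      intro j
      by_cases hj : ω ∈ A j
      · have hj' : (n : ℝ) * p (B j ω) < 1 := hj
        simp [hWdef, Set.indicator_apply, hj, hj']
      · have hj' : ¬ (n : ℝ) * p (B j ω) < 1 := hj
        simp [hWdef, Set.indicator_apply, hj, hj']
    have h4 : ENNReal.ofReal (∑' k, f k) ≤ ∑ j ∈ Finset.range n, W j ω := by
      calc ENNReal.ofReal (∑' k, f k)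
          ≤ ENNReal.ofReal
            (∑ j ∈ Finset.range n, (if (n : ℝ) * p (B j ω) < 1 then (1 : ℝ) else 0)) :=
            ENNReal.ofReal_le_ofReal (h1.trans_eq h2)
        _ = ∑ j ∈ Finset.range n,
            ENNReal.ofReal (if (n : ℝ) * p (B j ω) < 1 then (1 : ℝ) else 0) :=
            ENNReal.ofReal_sum_of_nonneg fun j _ => by split <;> norm_num
        _ = ∑ j ∈ Finset.range n, W j ω :=
            Finset.sum_congr rfl fun j _ => (hWj j).symm
    calc ENNReal.ofReal ((∑' k, f k) ^ 4) = (ENNReal.ofReal (∑' k, f k)) ^ 4 :=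
          ENNReal.ofReal_pow h3 4
      _ ≤ (∑ j ∈ Finset.range n, W j ω) ^ 4 := pow_le_pow_left' h4 4
  -- per term integral
  have hterm : ∀ a b c d : ℕ, (∫⁻ ω, W a ω * W b ω * W c ω * W d ω)
      = Q ^ ({a, b, c, d} : Finset ℕ).card := by
    intro a b c d
    have h1 : (fun ω => W a ω * W b ω * W c ω * W d ω)
        = (A a ∩ (A b ∩ (A c ∩ A d))).indicator fun _ => 1 := by
      funext ω
      by_cases ha : ω ∈ A a <;> by_cases hb : ω ∈ A b <;> by_cases hc : ω ∈ A c <;>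
        by_cases hd : ω ∈ A d <;>
        simp [hWdef, Set.indicator_apply, ha, hb, hc, hd]
    have hmeas : MeasurableSet (A a ∩ (A b ∩ (A c ∩ A d))) :=
      (hAm a).inter ((hAm b).inter ((hAm c).inter (hAm d)))
    rw [h1, lintegral_indicator hmeas, setLIntegral_one]
    have h2 : A a ∩ (A b ∩ (A c ∩ A d)) = ⋂ j ∈ ({a, b, c, d} : Finset ℕ), A j := by
      simp [Finset.set_biInter_insert, Finset.set_biInter_singleton]
    rw [h2, hInter]
  -- main computation
  have hΔn : Δ n = (n : ℝ) * q := hΔ n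
  have hΔ0 : 0 ≤ Δ n := by rw [hΔn]; positivity
  calc ∫⁻ ω, ENNReal.ofReal
        ((∑' k : ℕ, (if 1 ≤ Z n k ω ∧ (n : ℝ) * p k < 1 then (1 : ℝ) else 0)) ^ 4) ∂volume
      ≤ ∫⁻ ω, (∑ j ∈ Finset.range n, W j ω) ^ 4 ∂volume := lintegral_mono hpt
    _ = ∫⁻ ω, ∑ a ∈ Finset.range n, ∑ b ∈ Finset.range n, ∑ c ∈ Finset.range n,
        ∑ d ∈ Finset.range n, W a ω * W b ω * W c ω * W d ω ∂volume := by
        congr 1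
        funext ω
        exact occ_expand (fun j => W j ω) (Finset.range n)
    _ = ∑ a ∈ Finset.range n, ∑ b ∈ Finset.range n, ∑ c ∈ Finset.range n,
        ∑ d ∈ Finset.range n, ∫⁻ ω, W a ω * W b ω * W c ω * W d ω ∂volume := by
        rw [lintegral_finset_sum _ (fun a _ => Finset.measurable_sum _ fun b _ =>
          Finset.measurable_sum _ fun c _ => Finset.measurable_sum _ fun d _ =>
          (show Measurable fun ω => W a ω * W b ω * W c ω * W d ω from
            (((hWm a).mul (hWm b)).mul (hWm c)).mul (hWm d)))]
        refine Finset.sum_congr rfl fun a _ => ?_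
        rw [lintegral_finset_sum _ (fun b _ => Finset.measurable_sum _ fun c _ =>
          Finset.measurable_sum _ fun d _ =>
          (show Measurable fun ω => W a ω * W b ω * W c ω * W d ω from
            (((hWm a).mul (hWm b)).mul (hWm c)).mul (hWm d)))]
        refine Finset.sum_congr rfl fun b _ => ?_
        rw [lintegral_finset_sum _ (fun c _ => Finset.measurable_sum _ fun d _ =>
          (show Measurable fun ω => W a ω * W b ω * W c ω * W d ω from
            (((hWm a).mul (hWm b)).mul (hWm c)).mul (hWm d)))]
        refine Finset.sum_congr rfl fun c _ => ?_
        rw [lintegral_finset_sum _ (fun d _ =>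
          (show Measurable fun ω => W a ω * W b ω * W c ω * W d ω from
            (((hWm a).mul (hWm b)).mul (hWm c)).mul (hWm d)))]
    _ = ∑ a ∈ Finset.range n, ∑ b ∈ Finset.range n, ∑ c ∈ Finset.range n,
        ∑ d ∈ Finset.range n, Q ^ ({a, b, c, d} : Finset ℕ).card :=
        Finset.sum_congr rfl fun a _ => Finset.sum_congr rfl fun b _ =>
          Finset.sum_congr rfl fun c _ => Finset.sum_congr rfl fun d _ => hterm a b c d
    _ ≤ ∑ a ∈ Finset.range n, ∑ b ∈ Finset.range n, ∑ c ∈ Finset.range n,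
        ∑ d ∈ Finset.range n,
        (occE a b * occE b c * occE c d * Q
        + (occE a b * occE b c + occE a b * occE b d + occE a c * occE c d + occE b c * occE c d
           + occE a b * occE c d + occE a c * occE b d + occE a d * occE b c) * Q ^ 2
        + (occE a b + occE a c + occE a d + occE b c + occE b d + occE c d) * Q ^ 3
        + Q ^ 4) :=
        Finset.sum_le_sum fun a _ => Finset.sum_le_sum fun b _ =>
          Finset.sum_le_sum fun c _ => Finset.sum_le_sum fun d _ => occ_key Q a b c d
    _ = (n : ℝ≥0∞) * Q + 7 * ((n : ℝ≥0∞) * Q) ^ 2 + 6 * ((n : ℝ≥0∞) * Q) ^ 3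
        + ((n : ℝ≥0∞) * Q) ^ 4 := occ_sum Q n
    _ = ENNReal.ofReal (Δ n + 7 * Δ n ^ 2 + 6 * Δ n ^ 3 + Δ n ^ 4) := by
        have hoΔ : ENNReal.ofReal (Δ n) = (n : ℝ≥0∞) * Q := by
          rw [hΔn, ENNReal.ofReal_mul (Nat.cast_nonneg n), ENNReal.ofReal_natCast]
        rw [ENNReal.ofReal_add (by positivity) (by positivity),
          ENNReal.ofReal_add (by positivity) (by positivity),
          ENNReal.ofReal_add (by positivity) (by positivity),
          ENNReal.ofReal_mul (by norm_num : (0 : ℝ) ≤ 7),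
          ENNReal.ofReal_mul (by norm_num : (0 : ℝ) ≤ 6),
          ENNReal.ofReal_pow hΔ0, ENNReal.ofReal_pow hΔ0, ENNReal.ofReal_pow hΔ0,
          hoΔ]
        norm_num
end

section
/- Let G : [0, ∞) → [0, ∞) be a locally bounded function. Then, for any l ∈ ℕ and any t ≥ 0, E ( Σ_{k≥0} G(t − S_k) 1{S_k ≤ t} )^l ≤ ( Σ_{j=0}^{⌊t⌋} sup_{y ∈ [j, j+1)} G(y) )^l · E (ν(1))^l. -/
open MeasureTheory ProbabilityTheory Filter Set

set_option linter.unusedSectionVars false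

section RenewalAux

variable {Ω : Type*} [MeasureSpace Ω] [IsProbabilityMeasure (volume : Measure Ω)]
  {ξ : ℕ → Ω → ℝ} {S : ℕ → Ω → ℝ}

lemma rsn_S_meas (hξmeas : ∀ k, Measurable (ξ k))
    (hS : ∀ n ω, S n ω = ∑ i ∈ Finset.range n, ξ i ω) (n : ℕ) : Measurable (S n) := by
  have : S n = fun ω => ∑ i ∈ Finset.range n, ξ i ω := funext (hS n)
  rw [this]
  exact Finset.measurable_sum _ (fun i _ => hξmeas i)

lemma rsn_S_nonneg (hξpos : ∀ k ω, 0 < ξ k ω)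
    (hS : ∀ n ω, S n ω = ∑ i ∈ Finset.range n, ξ i ω) (n : ℕ) (ω : Ω) : 0 ≤ S n ω := by
  rw [hS]
  exact Finset.sum_nonneg fun i _ => (hξpos i ω).le

lemma rsn_S_diff (hS : ∀ n ω, S n ω = ∑ i ∈ Finset.range n, ξ i ω) {m k : ℕ} (hmk : m ≤ k)
    (ω : Ω) : S k ω = S m ω + ∑ r ∈ Finset.Ico m k, ξ r ω := by
  rw [hS, hS, ← Finset.sum_range_add_sum_Ico _ hmk]

/-- Almost surely, for every `x`, only finitely many partial sums lie below `x`. -/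
lemma rsn_as_finite (hξmeas : ∀ k, Measurable (ξ k)) (hξpos : ∀ k ω, 0 < ξ k ω)
    (hindep : iIndepFun (m := fun _ : ℕ => Real.measurableSpace) ξ volume)
    (hid : ∀ k, IdentDistrib (ξ k) (ξ 0) volume volume)
    (hS : ∀ n ω, S n ω = ∑ i ∈ Finset.range n, ξ i ω) :
    ∀ᵐ ω, ∀ x : ℝ, {k : ℕ | S k ω ≤ x}.Finite := by
  -- find c > 0 with positive probability that ξ 0 > c
  obtain ⟨n₀, hn₀⟩ : ∃ n : ℕ, volume (ξ 0 ⁻¹' Ioi (1 / (n + 1) : ℝ)) ≠ 0 := by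
    by_contra h
    push_neg at h
    have hu : (⋃ n : ℕ, ξ 0 ⁻¹' Ioi (1 / (n + 1) : ℝ)) = univ := by
      ext ω
      simp only [mem_iUnion, mem_preimage, mem_Ioi, mem_univ, iff_true]
      obtain ⟨n, hn⟩ := exists_nat_one_div_lt (hξpos 0 ω)
      exact ⟨n, hn⟩
    have := measure_iUnion_null (fun n => h n)
    rw [hu] at this
    simp at this
  set c : ℝ := 1 / (n₀ + 1) with hc
  have hcpos : 0 < c := by positivity
  set s : ℕ → Set Ω := fun k => ξ k ⁻¹' Ioi c with hsdef
  have hsm : ∀ k, MeasurableSet (s k) := fun k => (hξmeas k) measurableSet_Ioi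
  have hsmeas : ∀ k, volume (s k) = volume (s 0) := by
    intro k
    exact (hid k).measure_mem_eq measurableSet_Ioi
  have hindepset : iIndepSet s volume := by
    rw [iIndepSet_iff_meas_biInter hsm]
    intro F
    exact hindep.meas_biInter (fun i _ => ⟨Ioi c, measurableSet_Ioi, rfl⟩)
  have htsum : (∑' k, volume (s k)) = ⊤ := by
    have : ∀ k, volume (s k) = volume (s 0) := hsmeas
    rw [tsum_congr this, ENNReal.tsum_const_eq_top_of_ne_zero hn₀]
  have hls := ProbabilityTheory.measure_limsup_eq_one hsm hindepset htsum
  have : ∀ᵐ ω, ω ∈ limsup s atTop := by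
    rw [ae_iff]
    have : {ω | ¬ ω ∈ limsup s atTop} = (limsup s atTop)ᶜ := rfl
    rw [this, measure_compl (by
      exact MeasurableSet.measurableSet_limsup (fun n => hsm n)) (measure_ne_top _ _), hls]
    simp
  filter_upwards [this] with ω hω x
  have hfreq : {k : ℕ | c < ξ k ω}.Infinite := by
    rw [← Nat.frequently_atTop_iff_infinite]
    exact mem_limsup_iff_frequently_mem.mp hω
  obtain ⟨F, hFsub, hFcard⟩ := hfreq.exists_subset_card_eq (⌈x / c⌉₊ + 1)
  set M : ℕ := (F.sup id) + 1 with hM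
  refine Set.Finite.subset (Set.finite_Iio M) ?_
  intro k hk
  simp only [mem_setOf_eq] at hk
  by_contra hkM
  simp only [mem_Iio, not_lt] at hkM
  have hFk : F ⊆ Finset.range k := by
    intro i hi
    simp only [Finset.mem_range]
    have : i ≤ F.sup id := Finset.le_sup (f := id) hi
    omega
  have h1 : (F.card : ℝ) * c ≤ S k ω := by
    rw [hS]
    calc (F.card : ℝ) * c = ∑ _i ∈ F, c := by rw [Finset.sum_const, nsmul_eq_mul]
    _ ≤ ∑ i ∈ F, ξ i ω := Finset.sum_le_sum fun i hi => (hFsub hi).le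
    _ ≤ ∑ i ∈ Finset.range k, ξ i ω := Finset.sum_le_sum_of_subset_of_nonneg hFk
        (fun i _ _ => (hξpos i ω).le)
  have h2 : x < (F.card : ℝ) * c := by
    rw [hFcard]
    have : x / c < (⌈x / c⌉₊ + 1 : ℝ) := by
      have := Nat.le_ceil (x / c)
      linarith
    calc x = (x / c) * c := by field_simp
    _ < ((⌈x / c⌉₊ + 1 : ℝ)) * c := by
        exact mul_lt_mul_of_pos_right this hcpos
    _ = _ := by push_cast; ring
  linarith


/-- The tuple of the first `m` variables is independent of the tuple of the next `D`. -/
lemma rsn_indep_tuple (hξmeas : ∀ k, Measurable (ξ k))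
    (hindep : iIndepFun (m := fun _ : ℕ => Real.measurableSpace) ξ volume) (m D : ℕ) :
    IndepFun (fun ω (i : Fin m) => ξ i ω) (fun ω (q : Fin D) => ξ (m + q) ω) volume := by
  classical
  have hdisj : Disjoint (Finset.range m) (Finset.Ico m (m + D)) := by
    simp only [Finset.disjoint_left, Finset.mem_range, Finset.mem_Ico]
    omega
  have h := hindep.indepFun_finset (Finset.range m) (Finset.Ico m (m + D)) hdisj hξmeas
  have hφm : Measurable (fun (v : {x // x ∈ Finset.range m} → ℝ) (i : Fin m) =>
      v ⟨i, Finset.mem_range.mpr i.isLt⟩) := measurable_pi_lambda _ fun i => measurable_pi_apply _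
  have hψm : Measurable (fun (v : {x // x ∈ Finset.Ico m (m + D)} → ℝ) (q : Fin D) =>
      v ⟨m + q, Finset.mem_Ico.mpr ⟨Nat.le_add_right _ _, by omega⟩⟩) :=
    measurable_pi_lambda _ fun q => measurable_pi_apply _
  exact h.comp hφm hψm

/-- The law of a block of `D` consecutive variables does not depend on the offset. -/
lemma rsn_block_ident (hξmeas : ∀ k, Measurable (ξ k))
    (hindep : iIndepFun (m := fun _ : ℕ => Real.measurableSpace) ξ volume)
    (hid : ∀ k, IdentDistrib (ξ k) (ξ 0) volume volume) (D : ℕ) :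
    ∀ m, IdentDistrib (fun ω (q : Fin D) => ξ (m + q) ω) (fun ω (q : Fin D) => ξ q ω)
      volume volume := by
  induction D with
  | zero =>
      intro m
      have h1 : (fun ω (q : Fin 0) => ξ (m + q) ω) = fun _ω => (Fin.elim0 : Fin 0 → ℝ) := by
        funext ω q; exact q.elim0
      have h2 : (fun ω (q : Fin 0) => ξ q ω) = fun _ω => (Fin.elim0 : Fin 0 → ℝ) := by
        funext ω q; exact q.elim0
      rw [h1, h2]
      exact IdentDistrib.refl aemeasurable_const
  | succ D ih =>
      intro m
      -- tuple of length D+1 with offset m as image of (ξ m, tuple with offset m+1)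
      set cons : ℝ × (Fin D → ℝ) → (Fin (D + 1) → ℝ) := fun p => Fin.cons p.1 p.2 with hcons
      have hconsm : Measurable cons := by
        apply measurable_pi_lambda
        intro i
        refine Fin.cases ?_ ?_ i
        · simpa [hcons] using measurable_fst
        · intro q
          simpa [hcons, Function.comp_def] using (measurable_pi_apply q).comp measurable_snd
      have key : ∀ m', (fun ω (q : Fin (D + 1)) => ξ (m' + q) ω)
          = cons ∘ (fun ω => (ξ m' ω, fun q : Fin D => ξ (m' + 1 + q) ω)) := by
        intro m'
        funext ω
        refine funext fun i => ?_
        refine Fin.cases ?_ ?_ i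
        · simp [hcons]
        · intro q
          simp only [hcons, Function.comp_apply, Fin.cons_succ]
          congr 1
          simp [Fin.val_succ]
          omega
      have hmeas_tuple : ∀ m' D', Measurable (fun ω (q : Fin D') => ξ (m' + q) ω) :=
        fun m' D' => measurable_pi_lambda _ fun q => hξmeas _
      have hindep' : ∀ m', IndepFun (ξ m') (fun ω (q : Fin D) => ξ (m' + 1 + q) ω) volume := by
        intro m'
        have hdisj : Disjoint ({m'} : Finset ℕ) (Finset.Ico (m' + 1) (m' + 1 + D)) := by
          simp only [Finset.disjoint_left, Finset.mem_singleton, Finset.mem_Ico]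
          omega
        have h := hindep.indepFun_finset {m'} (Finset.Ico (m' + 1) (m' + 1 + D)) hdisj hξmeas
        have hφm : Measurable (fun (v : {x // x ∈ ({m'} : Finset ℕ)} → ℝ) =>
            v ⟨m', Finset.mem_singleton_self m'⟩) := measurable_pi_apply _
        have hψm : Measurable (fun (v : {x // x ∈ Finset.Ico (m' + 1) (m' + 1 + D)} → ℝ)
            (q : Fin D) => v ⟨m' + 1 + q, Finset.mem_Ico.mpr ⟨Nat.le_add_right _ _, by omega⟩⟩) :=
          measurable_pi_lambda _ fun q => measurable_pi_apply _
        exact h.comp hφm hψm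
      have hpair_law : ∀ m', Measure.map
            (fun ω => (ξ m' ω, fun q : Fin D => ξ (m' + 1 + q) ω)) volume
          = (Measure.map (ξ m') volume).prod
              (Measure.map (fun ω (q : Fin D) => ξ (m' + 1 + q) ω) volume) := by
        intro m'
        exact (indepFun_iff_map_prod_eq_prod_map_map (hξmeas m').aemeasurable
          (hmeas_tuple (m' + 1) D).aemeasurable).mp (hindep' m')
      have hmarg1 : Measure.map (ξ m) volume = Measure.map (ξ 0) volume := (hid m).map_eq
      have hmarg2 : Measure.map (fun ω (q : Fin D) => ξ (m + 1 + q) ω) volume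
          = Measure.map (fun ω (q : Fin D) => ξ (0 + 1 + q) ω) volume := by
        rw [(ih (m + 1)).map_eq, (ih (0 + 1)).map_eq]
      refine ⟨(hmeas_tuple m (D + 1)).aemeasurable,
        (measurable_pi_lambda _ fun q => hξmeas _).aemeasurable, ?_⟩
      have h0 : (fun ω (q : Fin (D + 1)) => ξ (q : ℕ) ω)
          = fun ω (q : Fin (D + 1)) => ξ (0 + q) ω := by
        funext ω q; norm_num
      rw [key m, h0, key 0]
      rw [← Measure.map_map hconsm ((hξmeas m).prodMk (hmeas_tuple (m + 1) D)),
          ← Measure.map_map hconsm ((hξmeas 0).prodMk (hmeas_tuple (0 + 1) D)),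
          hpair_law m, hpair_law 0, hmarg1, hmarg2]

lemma rsn_g_eval {M r : ℕ} (f : ℕ → ℝ) (hrM : r ≤ M) :
    (∑ q ∈ Finset.univ.filter (fun q : Fin M => (q : ℕ) < r), f q)
      = ∑ q ∈ Finset.range r, f q := by
  rw [Finset.sum_filter]
  rw [Fin.sum_univ_eq_sum_range (fun i => if i < r then f i else 0) M]
  rw [← Finset.sum_filter]
  congr 1
  ext i
  simp only [Finset.mem_filter, Finset.mem_range]
  omega

lemma rsn_key_prod (hξmeas : ∀ k, Measurable (ξ k))
    (hindep : iIndepFun (m := fun _ : ℕ => Real.measurableSpace) ξ volume)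
    (hid : ∀ k, IdentDistrib (ξ k) (ξ 0) volume volume)
    (hS : ∀ n ω, S n ω = ∑ i ∈ Finset.range n, ξ i ω)
    (s : ℝ) {l : ℕ} (m n : ℕ) (κ : Fin l → ℕ) (hκ : ∀ i, m ≤ κ i) (hκn : ∀ i, κ i < n) :
    volume (({ω | s < S m ω} ∩ ⋂ r ∈ Finset.range m, {ω | S r ω ≤ s}) ∩
        ⋂ i, {ω | ∑ r ∈ Finset.Ico m (κ i), ξ r ω ≤ 1})
      = volume ({ω | s < S m ω} ∩ ⋂ r ∈ Finset.range m, {ω | S r ω ≤ s}) *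
        volume (⋂ i, {ω | S (κ i - m) ω ≤ 1}) := by
  classical
  set g : ∀ (M : ℕ), ℕ → (Fin M → ℝ) → ℝ :=
    fun M r v => ∑ q ∈ Finset.univ.filter (fun q : Fin M => (q : ℕ) < r), v q with hg
  have hgmeas : ∀ M r, Measurable (g M r) :=
    fun M r => Finset.measurable_sum _ (fun q _ => measurable_pi_apply q)
  set A' : Set (Fin m → ℝ) :=
    {v | s < ∑ q, v q} ∩ ⋂ r ∈ Finset.range m, {v | g m r v ≤ s} with hA'
  set B' : Set (Fin n → ℝ) := ⋂ i, {v | g n (κ i - m) v ≤ 1} with hB'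
  have hA'meas : MeasurableSet A' := by
    refine MeasurableSet.inter ?_ ?_
    · exact measurableSet_lt measurable_const (Finset.measurable_sum _ fun q _ =>
        measurable_pi_apply q)
    · exact MeasurableSet.biInter (Set.to_countable _)
        (fun r _ => measurableSet_le (hgmeas m r) measurable_const)
  have hB'meas : MeasurableSet B' :=
    MeasurableSet.iInter fun i => measurableSet_le (hgmeas n _) measurable_const
  have hpre1 : (fun ω (i : Fin m) => ξ i ω) ⁻¹' A'
      = ({ω | s < S m ω} ∩ ⋂ r ∈ Finset.range m, {ω | S r ω ≤ s}) := by
    ext ω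
    simp only [hA', mem_preimage, mem_inter_iff, mem_setOf_eq, mem_iInter]
    constructor
    · rintro ⟨h1, h2⟩
      refine ⟨?_, fun r hr => ?_⟩
      · rwa [Fin.sum_univ_eq_sum_range (fun q => ξ q ω) m, ← hS] at h1
      · have := h2 r hr
        simp only [mem_setOf_eq, hg] at this
        rwa [rsn_g_eval (fun q => ξ q ω) (Finset.mem_range.mp hr).le, ← hS] at this
    · rintro ⟨h1, h2⟩
      refine ⟨?_, fun r hr => ?_⟩
      · rwa [Fin.sum_univ_eq_sum_range (fun q => ξ q ω) m, ← hS]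
      · simp only [mem_setOf_eq, hg]
        rw [rsn_g_eval (fun q => ξ q ω) (Finset.mem_range.mp hr).le, ← hS]
        exact h2 r hr
  have hsum_eq : ∀ (i : Fin l) (ω : Ω),
      g n (κ i - m) (fun q : Fin n => ξ (m + q) ω) = ∑ r ∈ Finset.Ico m (κ i), ξ r ω := by
    intro i ω
    simp only [hg]
    rw [rsn_g_eval (fun q => ξ (m + q) ω) (by have := hκn i; omega)]
    rw [Finset.sum_Ico_eq_sum_range]
  have hpre2 : (fun ω (q : Fin n) => ξ (m + q) ω) ⁻¹' B'
      = ⋂ i, {ω | ∑ r ∈ Finset.Ico m (κ i), ξ r ω ≤ 1} := by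
    ext ω
    simp only [hB', mem_preimage, mem_iInter, mem_setOf_eq]
    refine forall_congr' fun i => ?_
    rw [hsum_eq i ω]
  have hpre3 : (fun ω (q : Fin n) => ξ q ω) ⁻¹' B'
      = ⋂ i, {ω | S (κ i - m) ω ≤ 1} := by
    ext ω
    simp only [hB', mem_preimage, mem_iInter, mem_setOf_eq]
    refine forall_congr' fun i => ?_
    simp only [hg]
    rw [rsn_g_eval (fun q => ξ q ω) (by have := hκn i; omega), ← hS]
  rw [← hpre1, ← hpre2]
  rw [(rsn_indep_tuple hξmeas hindep m n).measure_inter_preimage_eq_mul A' B' hA'meas hB'meas]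
  congr 1
  have := (rsn_block_ident hξmeas hindep hid n m).measure_mem_eq hB'meas
  rw [this, hpre3]

/-- Core estimate: the `l`-fold count correlations over a unit interval are dominated by
those of the count at `1`. -/
lemma rsn_core (hξmeas : ∀ k, Measurable (ξ k)) (hξpos : ∀ k ω, 0 < ξ k ω)
    (hindep : iIndepFun (m := fun _ : ℕ => Real.measurableSpace) ξ volume)
    (hid : ∀ k, IdentDistrib (ξ k) (ξ 0) volume volume)
    (hS : ∀ n ω, S n ω = ∑ i ∈ Finset.range n, ξ i ω)
    (s : ℝ) (l n : ℕ) :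
    ∑ κ ∈ Fintype.piFinset (fun _ : Fin l => Finset.range n),
        volume (⋂ i, {ω | S (κ i) ω ∈ Set.Ioc s (s + 1)})
      ≤ ∑ δ ∈ Fintype.piFinset (fun _ : Fin l => Finset.range n),
        volume (⋂ i, {ω | S (δ i) ω ≤ 1}) := by
  classical
  rcases Nat.eq_zero_or_pos l with rfl | hl
  · simp
  set P := Fintype.piFinset (fun _ : Fin l => Finset.range n) with hP
  set A : ℕ → Set Ω :=
    fun m => {ω | s < S m ω} ∩ ⋂ r ∈ Finset.range m, {ω | S r ω ≤ s} with hA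
  have hSmeas := rsn_S_meas hξmeas hS
  have hAmeas : ∀ m, MeasurableSet (A m) := by
    intro m
    refine (measurableSet_lt measurable_const (hSmeas m)).inter ?_
    exact MeasurableSet.biInter (Set.to_countable _)
      (fun r _ => measurableSet_le (hSmeas r) measurable_const)
  have hAdisj' : ∀ {a b : ℕ}, a < b → Disjoint (A a) (A b) := by
    intro a b hab
    rw [Set.disjoint_left]
    rintro ω hωa hωb
    have h1 : s < S a ω := hωa.1
    have h2 : S a ω ≤ s := Set.mem_iInter₂.mp hωb.2 a (Finset.mem_range.mpr hab)
    linarith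
  have hEmeas : ∀ k, MeasurableSet {ω | S k ω ∈ Set.Ioc s (s + 1)} :=
    fun k => (hSmeas k) measurableSet_Ioc
  set Q : (Fin l → ℕ) → ENNReal := fun δ => volume (⋂ i, {ω | S (δ i) ω ≤ 1}) with hQ
  -- pointwise bound for each κ
  have hκbound : ∀ κ ∈ P, volume (⋂ i, {ω | S (κ i) ω ∈ Set.Ioc s (s + 1)})
      ≤ ∑ m ∈ Finset.range n,
          (if ∀ i, m ≤ κ i then volume (A m) * Q (fun i => κ i - m) else 0) := by
    intro κ hκP
    have hκn : ∀ i, κ i < n := by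
      intro i
      have := Fintype.mem_piFinset.mp hκP i
      exact Finset.mem_range.mp this
    set e : Set Ω := ⋂ i, {ω | S (κ i) ω ∈ Set.Ioc s (s + 1)} with he
    have hcover : e ⊆ ⋃ m ∈ Finset.range n, (e ∩ A m) := by
      intro ω hω
      have h0 : s < S (κ ⟨0, hl⟩) ω := (Set.mem_iInter.mp hω ⟨0, hl⟩).1
      have hex : ∃ r, s < S r ω := ⟨κ ⟨0, hl⟩, h0⟩
      set m := Nat.find hex with hm
      have hmle : m ≤ κ ⟨0, hl⟩ := Nat.find_min' hex h0
      refine Set.mem_biUnion (Finset.mem_range.mpr (lt_of_le_of_lt hmle (hκn _))) ?_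
      refine ⟨hω, Nat.find_spec hex, ?_⟩
      refine Set.mem_iInter₂.mpr fun r hr => ?_
      have := Nat.find_min hex (Finset.mem_range.mp hr)
      exact not_lt.mp this
    calc volume e ≤ ∑ m ∈ Finset.range n, volume (e ∩ A m) :=
          le_trans (measure_mono hcover) (measure_biUnion_finset_le _ _)
    _ ≤ _ := by
        refine Finset.sum_le_sum fun m _ => ?_
        by_cases hcase : ∀ i, m ≤ κ i
        · rw [if_pos hcase]
          have hsub : e ∩ A m ⊆ A m ∩ ⋂ i, {ω | ∑ r ∈ Finset.Ico m (κ i), ξ r ω ≤ 1} := by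
            rintro ω ⟨hωe, hωA⟩
            refine ⟨hωA, Set.mem_iInter.mpr fun i => ?_⟩
            have h1 : S (κ i) ω ∈ Set.Ioc s (s + 1) := Set.mem_iInter.mp hωe i
            have h2 : s < S m ω := hωA.1
            have h3 := rsn_S_diff hS (hcase i) ω
            simp only [mem_setOf_eq]
            have := h1.2
            linarith [h3 ▸ this]
          calc volume (e ∩ A m) ≤ volume (A m ∩ ⋂ i, {ω | ∑ r ∈ Finset.Ico m (κ i), ξ r ω ≤ 1}) :=
                measure_mono hsub
          _ = volume (A m) * Q (fun i => κ i - m) := by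
              rw [hA, hQ]
              exact rsn_key_prod hξmeas hindep hid hS s m n κ hcase hκn
        · rw [if_neg hcase]
          push_neg at hcase
          obtain ⟨i₀, hi₀⟩ := hcase
          have : e ∩ A m = ∅ := by
            rw [Set.eq_empty_iff_forall_notMem]
            rintro ω ⟨hωe, hωA⟩
            have h1 : s < S (κ i₀) ω := (Set.mem_iInter.mp hωe i₀).1
            have h2 : S (κ i₀) ω ≤ s :=
              Set.mem_iInter₂.mp hωA.2 (κ i₀) (Finset.mem_range.mpr hi₀)
            linarith
          rw [this]
          simp
  calc ∑ κ ∈ P, volume (⋂ i, {ω | S (κ i) ω ∈ Set.Ioc s (s + 1)})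
      ≤ ∑ κ ∈ P, ∑ m ∈ Finset.range n,
          (if ∀ i, m ≤ κ i then volume (A m) * Q (fun i => κ i - m) else 0) :=
        Finset.sum_le_sum hκbound
  _ = ∑ m ∈ Finset.range n, ∑ κ ∈ P,
          (if ∀ i, m ≤ κ i then volume (A m) * Q (fun i => κ i - m) else 0) :=
        Finset.sum_comm
  _ ≤ ∑ m ∈ Finset.range n, volume (A m) * ∑ δ ∈ P, Q δ := by
        refine Finset.sum_le_sum fun m _ => ?_
        rw [← Finset.sum_filter]
        have himg : ∀ κ ∈ P.filter (fun κ => ∀ i, m ≤ κ i),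
            volume (A m) * Q (fun i => κ i - m) = volume (A m) * Q ((fun i => · i - m) κ) := by
          intro κ _; rfl
        calc ∑ κ ∈ P.filter (fun κ => ∀ i, m ≤ κ i), volume (A m) * Q (fun i => κ i - m)
            = ∑ δ ∈ (P.filter (fun κ => ∀ i, m ≤ κ i)).image (fun κ i => κ i - m),
                volume (A m) * Q δ := by
              rw [Finset.sum_image]
              intro κ hκ κ' hκ' hee
              have hκm := (Finset.mem_filter.mp hκ).2
              have hκ'm := (Finset.mem_filter.mp hκ').2
              funext i
              have := congrFun hee i
              simp only at this
              have h1 := hκm i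
              have h2 := hκ'm i
              omega
        _ ≤ ∑ δ ∈ P, volume (A m) * Q δ := by
              refine Finset.sum_le_sum_of_subset ?_
              intro δ hδ
              obtain ⟨κ, hκmem, rfl⟩ := Finset.mem_image.mp hδ
              have hκP := (Finset.mem_filter.mp hκmem).1
              refine Fintype.mem_piFinset.mpr fun i => ?_
              have := Finset.mem_range.mp (Fintype.mem_piFinset.mp hκP i)
              exact Finset.mem_range.mpr (by omega)
        _ = volume (A m) * ∑ δ ∈ P, Q δ := by rw [Finset.mul_sum]
  _ = (∑ m ∈ Finset.range n, volume (A m)) * ∑ δ ∈ P, Q δ := by rw [Finset.sum_mul]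
  _ ≤ 1 * ∑ δ ∈ P, Q δ := by
        refine mul_le_mul_left ?_ _
        have hd : (Finset.range n : Set ℕ).PairwiseDisjoint A := by
          intro a _ b _ hab
          rcases hab.lt_or_gt with h | h
          · exact hAdisj' h
          · exact (hAdisj' h).symm
        rw [← measure_biUnion_finset hd (fun m _ => hAmeas m)]
        exact prob_le_one
  _ = ∑ δ ∈ P, Q δ := one_mul _

lemma rsn_pow_iSup (a : ℕ → ENNReal) (ha : Monotone a) (l : ℕ) :
    (⨆ n, a n) ^ l = ⨆ n, a n ^ l := by
  refine le_antisymm ?_ (iSup_le fun n => pow_le_pow_left' (le_iSup a n) l)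
  have h1 : Tendsto a atTop (nhds (⨆ n, a n)) := tendsto_atTop_iSup ha
  have h2 : Tendsto (fun n => a n ^ l) atTop (nhds ((⨆ n, a n) ^ l)) :=
    ((ENNReal.continuous_pow l).continuousAt.tendsto).comp h1
  have hmono : Monotone fun n => a n ^ l := fun i j hij => pow_le_pow_left' (ha hij) l
  have h3 : Tendsto (fun n => a n ^ l) atTop (nhds (⨆ n, a n ^ l)) := tendsto_atTop_iSup hmono
  exact le_of_eq (tendsto_nhds_unique h2 h3)

lemma rsn_expand {E : ℕ → Set Ω} (hE : ∀ k, MeasurableSet (E k)) (n l : ℕ) :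
    ∫⁻ ω, (∑ k ∈ Finset.range n, Set.indicator (E k) (fun _ => (1 : ENNReal)) ω) ^ l ∂volume
      = ∑ κ ∈ Fintype.piFinset (fun _ : Fin l => Finset.range n),
          volume (⋂ i, E (κ i)) := by
  classical
  have hpt : ∀ ω, (∑ k ∈ Finset.range n, Set.indicator (E k) (fun _ => (1 : ENNReal)) ω) ^ l
      = ∑ κ ∈ Fintype.piFinset (fun _ : Fin l => Finset.range n),
          Set.indicator (⋂ i, E (κ i)) (fun _ => (1 : ENNReal)) ω := by
    intro ω
    have h1 : (∑ k ∈ Finset.range n, Set.indicator (E k) (fun _ => (1 : ENNReal)) ω) ^ l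
        = ∏ _i : Fin l, ∑ k ∈ Finset.range n,
            Set.indicator (E k) (fun _ => (1 : ENNReal)) ω := by
      rw [Finset.prod_const, Finset.card_univ, Fintype.card_fin]
    rw [h1, Finset.prod_univ_sum]
    refine Finset.sum_congr rfl fun κ _ => ?_
    by_cases h : ∀ i, ω ∈ E (κ i)
    · have hmem : ω ∈ ⋂ i, E (κ i) := Set.mem_iInter.mpr h
      rw [Set.indicator_of_mem hmem]
      refine Finset.prod_eq_one fun i _ => Set.indicator_of_mem (h i) _
    · push_neg at h
      obtain ⟨i₀, hi₀⟩ := h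
      have hmem : ω ∉ ⋂ i, E (κ i) := fun hc => hi₀ (Set.mem_iInter.mp hc i₀)
      rw [Set.indicator_of_notMem hmem]
      exact Finset.prod_eq_zero (Finset.mem_univ i₀) (Set.indicator_of_notMem hi₀ _)
  calc ∫⁻ ω, (∑ k ∈ Finset.range n, Set.indicator (E k) (fun _ => (1 : ENNReal)) ω) ^ l ∂volume
      = ∫⁻ ω, ∑ κ ∈ Fintype.piFinset (fun _ : Fin l => Finset.range n),
          Set.indicator (⋂ i, E (κ i)) (fun _ => (1 : ENNReal)) ω ∂volume :=
        lintegral_congr hpt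
  _ = ∑ κ ∈ Fintype.piFinset (fun _ : Fin l => Finset.range n),
        ∫⁻ ω, Set.indicator (⋂ i, E (κ i)) (fun _ => (1 : ENNReal)) ω ∂volume :=
        lintegral_finset_sum _ (fun κ _ => measurable_const.indicator
          (MeasurableSet.iInter fun i => hE (κ i)))
  _ = _ := by
        refine Finset.sum_congr rfl fun κ _ => ?_
        exact lintegral_indicator_one (MeasurableSet.iInter fun i => hE (κ i))

/-- Lemma B: moments of the number of renewals in any interval of length one are dominated by
the moments of the number of renewals in `[0,1]`. -/
lemma rsn_lemmaB (hξmeas : ∀ k, Measurable (ξ k)) (hξpos : ∀ k ω, 0 < ξ k ω)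
    (hindep : iIndepFun (m := fun _ : ℕ => Real.measurableSpace) ξ volume)
    (hid : ∀ k, IdentDistrib (ξ k) (ξ 0) volume volume)
    (hS : ∀ n ω, S n ω = ∑ i ∈ Finset.range n, ξ i ω)
    (s : ℝ) (l : ℕ) :
    ∫⁻ ω, (∑' k, Set.indicator {ω' | S k ω' ∈ Set.Ioc s (s + 1)} (fun _ => (1 : ENNReal)) ω) ^ l
        ∂volume
      ≤ ∫⁻ ω, (∑' k, Set.indicator {ω' | S k ω' ≤ 1} (fun _ => (1 : ENNReal)) ω) ^ l ∂volume := by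
  classical
  have hSmeas := rsn_S_meas hξmeas hS
  have hEmeas : ∀ k, MeasurableSet {ω' | S k ω' ∈ Set.Ioc s (s + 1)} :=
    fun k => (hSmeas k) measurableSet_Ioc
  have hDmeas : ∀ k, MeasurableSet {ω' | S k ω' ≤ 1} :=
    fun k => measurableSet_le (hSmeas k) measurable_const
  -- rewrite LHS as a sup
  have hpt : ∀ ω, (∑' k, Set.indicator {ω' | S k ω' ∈ Set.Ioc s (s + 1)}
        (fun _ => (1 : ENNReal)) ω) ^ l
      = ⨆ n, (∑ k ∈ Finset.range n,
          Set.indicator {ω' | S k ω' ∈ Set.Ioc s (s + 1)} (fun _ => (1 : ENNReal)) ω) ^ l := by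
    intro ω
    rw [ENNReal.tsum_eq_iSup_sum' (fun n => Finset.range n) Finset.exists_nat_subset_range]
    refine rsn_pow_iSup (fun n => ∑ k ∈ Finset.range n,
      Set.indicator {ω' | S k ω' ∈ Set.Ioc s (s + 1)} (fun _ => (1 : ENNReal)) ω) ?_ l
    exact fun i j hij => Finset.sum_le_sum_of_subset (Finset.range_subset_range.mpr hij)
  rw [lintegral_congr hpt]
  rw [lintegral_iSup (fun n => ((Finset.measurable_sum _ (fun k _ => measurable_const.indicator
        (hEmeas k))).pow_const l))
      (fun i j hij => fun ω => pow_le_pow_left' (Finset.sum_le_sum_of_subset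
        (f := fun k => Set.indicator {ω' | S k ω' ∈ Set.Ioc s (s + 1)} (fun _ => (1 : ENNReal)) ω)
        (Finset.range_subset_range.mpr hij)) l)]
  refine iSup_le fun n => ?_
  calc ∫⁻ ω, (∑ k ∈ Finset.range n,
        Set.indicator {ω' | S k ω' ∈ Set.Ioc s (s + 1)} (fun _ => (1 : ENNReal)) ω) ^ l ∂volume
      = ∑ κ ∈ Fintype.piFinset (fun _ : Fin l => Finset.range n),
          volume (⋂ i, {ω' | S (κ i) ω' ∈ Set.Ioc s (s + 1)}) := rsn_expand hEmeas n l
  _ ≤ ∑ δ ∈ Fintype.piFinset (fun _ : Fin l => Finset.range n),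
        volume (⋂ i, {ω' | S (δ i) ω' ≤ 1}) := rsn_core hξmeas hξpos hindep hid hS s l n
  _ = ∫⁻ ω, (∑ k ∈ Finset.range n,
        Set.indicator {ω' | S k ω' ≤ 1} (fun _ => (1 : ENNReal)) ω) ^ l ∂volume :=
        (rsn_expand hDmeas n l).symm
  _ ≤ _ := by
        refine lintegral_mono fun ω => ?_
        exact pow_le_pow_left' (ENNReal.sum_le_tsum _) l
end RenewalAux
/-- **Lemma 2.** Let `(ξ k)` be i.i.d. copies of a positive random variable,
`S n = ξ 0 + … + ξ (n-1)`, and `ν x = #{k ≥ 0 : S k ≤ x}`. If `G : ℝ → ℝ` is nonnegative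
and locally bounded on `[0,∞)`, then for any `l` and `t ≥ 0`,
`𝔼 (∑_{k : S k ≤ t} G (t - S k))ˡ ≤ (∑_{j=0}^{⌊t⌋} sup_{y ∈ [j,j+1)} G y)ˡ · 𝔼 (ν 1)ˡ`. -/
theorem renewal_shot_noise_moment_bound
    {Ω : Type*} [MeasureSpace Ω] [IsProbabilityMeasure (volume : Measure Ω)]
    (ξ : ℕ → Ω → ℝ)
    (hξmeas : ∀ k, Measurable (ξ k))
    (hξpos : ∀ k ω, 0 < ξ k ω)
    (hindep : iIndepFun (m := fun _ : ℕ => Real.measurableSpace) ξ volume)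
    (hid : ∀ k, IdentDistrib (ξ k) (ξ 0) volume volume)
    (S : ℕ → Ω → ℝ) (hS : ∀ n ω, S n ω = ∑ i ∈ Finset.range n, ξ i ω)
    (ν : ℝ → Ω → ℝ)
    (hν : ∀ x ω, ν x ω = ∑' k : ℕ, (if S k ω ≤ x then (1 : ℝ) else 0))
    (G : ℝ → ℝ)
    (hGnonneg : ∀ y, 0 ≤ y → 0 ≤ G y)
    (hGlocbdd : ∀ r : ℝ, BddAbove (G '' Set.Icc 0 r))
    (l : ℕ) (t : ℝ) (ht : 0 ≤ t) :
    ∫⁻ ω, ENNReal.ofReal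
        ((∑' k : ℕ, (if S k ω ≤ t then G (t - S k ω) else 0)) ^ l) ∂volume
      ≤ ENNReal.ofReal ((∑ j ∈ Finset.range (⌊t⌋₊ + 1),
            sSup (G '' Set.Ico (j : ℝ) (j + 1))) ^ l)
          * ∫⁻ ω, ENNReal.ofReal ((ν 1 ω) ^ l) ∂volume := by
  classical
  rcases Nat.eq_zero_or_pos l with rfl | hl
  · simp
  have hl' : l ≠ 0 := hl.ne'
  set J := Finset.range (⌊t⌋₊ + 1) with hJ
  set a : ℕ → ℝ := fun j => sSup (G '' Set.Ico (j : ℝ) (j + 1)) with ha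
  set c : ℕ → ENNReal := fun j => ENNReal.ofReal (a j) with hc
  have hSnonneg := rsn_S_nonneg hξpos hS
  have hSmeas := rsn_S_meas hξmeas hS
  have hbdd : ∀ j : ℕ, BddAbove (G '' Set.Ico (j : ℝ) (j + 1)) := by
    intro j
    refine (hGlocbdd ((j : ℝ) + 1)).mono (Set.image_mono ?_)
    intro y hy
    exact ⟨le_trans (Nat.cast_nonneg j) hy.1, hy.2.le⟩
  have ha_nonneg : ∀ j : ℕ, 0 ≤ a j := by
    intro j
    have hmem : G j ∈ G '' Set.Ico (j : ℝ) (j + 1) :=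
      ⟨j, ⟨le_refl _, lt_add_one _⟩, rfl⟩
    exact le_trans (hGnonneg j (Nat.cast_nonneg j)) (le_csSup (hbdd j) hmem)
  -- the ENNReal-valued shot noise
  set F : Ω → ENNReal :=
    fun ω => ∑' k, if S k ω ≤ t then ENNReal.ofReal (G (t - S k ω)) else 0 with hF
  set N : ℕ → Ω → ENNReal := fun j ω => ∑' k,
      Set.indicator {ω' | S k ω' ∈ Set.Ioc (t - j - 1) (t - j - 1 + 1)} (fun _ => (1 : ENNReal)) ω
    with hN
  set NN : Ω → ENNReal :=
    fun ω => ∑' k, Set.indicator {ω' | S k ω' ≤ 1} (fun _ => (1 : ENNReal)) ω with hNN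
  -- step 1 : pointwise comparison with the ENNReal shot noise
  have step1 : ∀ ω, ENNReal.ofReal
      ((∑' k : ℕ, (if S k ω ≤ t then G (t - S k ω) else 0)) ^ l) ≤ F ω ^ l := by
    intro ω
    by_cases hsum : Summable (fun k => if S k ω ≤ t then G (t - S k ω) else 0)
    · have hterm : ∀ k, 0 ≤ (if S k ω ≤ t then G (t - S k ω) else 0) := by
        intro k
        split
        · exact hGnonneg _ (by linarith)
        · exact le_refl 0
      rw [ENNReal.ofReal_pow (tsum_nonneg hterm), ENNReal.ofReal_tsum_of_nonneg hterm hsum]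
      refine le_of_eq ?_
      congr 1
      refine tsum_congr fun k => ?_
      split <;> simp
    · rw [tsum_eq_zero_of_not_summable hsum, zero_pow hl', ENNReal.ofReal_zero]
      exact zero_le
  -- step 2 : pointwise domination by weighted interval counts
  have step2 : ∀ ω, F ω ≤ ∑ j ∈ J, c j * N j ω := by
    intro ω
    have hterm : ∀ k, (if S k ω ≤ t then ENNReal.ofReal (G (t - S k ω)) else 0)
        ≤ ∑ j ∈ J, c j * Set.indicator {ω' | S k ω' ∈ Set.Ioc (t - j - 1) (t - j - 1 + 1)}
            (fun _ => (1 : ENNReal)) ω := by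
      intro k
      by_cases hk : S k ω ≤ t
      · rw [if_pos hk]
        set y : ℝ := t - S k ω with hy
        have hy0 : 0 ≤ y := by simp [hy]; linarith
        set j₀ : ℕ := ⌊y⌋₊ with hj₀
        have hj₀J : j₀ ∈ J := by
          rw [hJ, Finset.mem_range]
          have : j₀ ≤ ⌊t⌋₊ := Nat.floor_mono (by have := hSnonneg k ω; linarith)
          omega
        have hymem : (j₀ : ℝ) ≤ y ∧ y < j₀ + 1 := ⟨Nat.floor_le hy0, Nat.lt_floor_add_one y⟩
        have hmem : ω ∈ {ω' | S k ω' ∈ Set.Ioc (t - j₀ - 1) (t - j₀ - 1 + 1)} := by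
          simp only [mem_setOf_eq, Set.mem_Ioc]
          constructor
          · have := hymem.2; simp only [hy] at this; linarith
          · have := hymem.1; simp only [hy] at this; linarith
        have hGle : G (t - S k ω) ≤ a j₀ :=
          le_csSup (hbdd j₀) ⟨y, ⟨hymem.1, hymem.2⟩, by rw [hy]⟩
        calc ENNReal.ofReal (G (t - S k ω)) ≤ c j₀ := ENNReal.ofReal_le_ofReal hGle
        _ = c j₀ * Set.indicator {ω' | S k ω' ∈ Set.Ioc (t - j₀ - 1) (t - j₀ - 1 + 1)}
              (fun _ => (1 : ENNReal)) ω := by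
            rw [Set.indicator_of_mem hmem, mul_one]
        _ ≤ _ := Finset.single_le_sum (f := fun j => c j * Set.indicator
              {ω' | S k ω' ∈ Set.Ioc (t - j - 1) (t - j - 1 + 1)} (fun _ => (1 : ENNReal)) ω)
              (fun j _ => zero_le) hj₀J
      · rw [if_neg hk]
        exact zero_le
    calc F ω ≤ ∑' k, ∑ j ∈ J, c j * Set.indicator
          {ω' | S k ω' ∈ Set.Ioc (t - j - 1) (t - j - 1 + 1)} (fun _ => (1 : ENNReal)) ω :=
          ENNReal.tsum_le_tsum hterm
    _ = ∑ j ∈ J, ∑' k, c j * Set.indicator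
          {ω' | S k ω' ∈ Set.Ioc (t - j - 1) (t - j - 1 + 1)} (fun _ => (1 : ENNReal)) ω :=
          Summable.tsum_finsetSum (fun j _ => ENNReal.summable)
    _ = ∑ j ∈ J, c j * N j ω := by
          refine Finset.sum_congr rfl fun j _ => ?_
          rw [hN, ENNReal.tsum_mul_left]
  -- measurability of the counts
  have hNmeas : ∀ j, Measurable (N j) := by
    intro j
    refine Measurable.ennreal_tsum fun k => ?_
    exact measurable_const.indicator ((hSmeas k) measurableSet_Ioc)
  have hNNmeas : Measurable NN := by
    refine Measurable.ennreal_tsum fun k => ?_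
    exact measurable_const.indicator (measurableSet_le (hSmeas k) measurable_const)
  -- step 6 : identification of NN with ν 1
  have step6 : ∫⁻ ω, NN ω ^ l ∂volume = ∫⁻ ω, ENNReal.ofReal ((ν 1 ω) ^ l) ∂volume := by
    refine lintegral_congr_ae ?_
    filter_upwards [rsn_as_finite hξmeas hξpos hindep hid hS] with ω hω
    have hfin : {k : ℕ | S k ω ≤ 1}.Finite := hω 1
    have hterm : ∀ k, 0 ≤ (if S k ω ≤ 1 then (1 : ℝ) else 0) := by
      intro k; split <;> norm_num
    have hsum : Summable (fun k => if S k ω ≤ 1 then (1 : ℝ) else 0) := by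
      refine summable_of_ne_finset_zero (s := hfin.toFinset) fun k hk => ?_
      rw [Set.Finite.mem_toFinset] at hk
      simp only [mem_setOf_eq] at hk
      rw [if_neg hk]
    have hν1 : NN ω = ENNReal.ofReal (ν 1 ω) := by
      rw [hν, ENNReal.ofReal_tsum_of_nonneg hterm hsum]
      refine (tsum_congr fun k => ?_).symm
      by_cases hk : S k ω ≤ 1
      · rw [if_pos hk, Set.indicator_of_mem (show ω ∈ {ω' | S k ω' ≤ 1} from hk)]
        simp
      · rw [if_neg hk, Set.indicator_of_notMem (show ω ∉ {ω' | S k ω' ≤ 1} from hk)]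
        simp
    rw [hν1, ← ENNReal.ofReal_pow (by rw [hν]; exact tsum_nonneg hterm)]
  -- assembling
  calc ∫⁻ ω, ENNReal.ofReal
        ((∑' k : ℕ, (if S k ω ≤ t then G (t - S k ω) else 0)) ^ l) ∂volume
      ≤ ∫⁻ ω, F ω ^ l ∂volume := lintegral_mono step1
  _ ≤ ∫⁻ ω, (∑ j ∈ J, c j * N j ω) ^ l ∂volume :=
      lintegral_mono fun ω => pow_le_pow_left' (step2 ω) l
  _ ≤ ENNReal.ofReal ((∑ j ∈ J, a j) ^ l) * ∫⁻ ω, ENNReal.ofReal ((ν 1 ω) ^ l) ∂volume := by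
      rw [← step6]
      set C : ENNReal := ∑ j ∈ J, c j with hC
      have hCofReal : C = ENNReal.ofReal (∑ j ∈ J, a j) := by
        rw [hC, ENNReal.ofReal_sum_of_nonneg (fun j _ => ha_nonneg j)]
      have hCpow : ENNReal.ofReal ((∑ j ∈ J, a j) ^ l) = C ^ l := by
        rw [ENNReal.ofReal_pow (Finset.sum_nonneg fun j _ => ha_nonneg j), hCofReal]
      rw [hCpow]
      by_cases hC0 : C = 0
      · have hC0' : ∑ j ∈ J, c j = 0 := by rw [← hC]; exact hC0
        have hcj : ∀ j ∈ J, c j = 0 := Finset.sum_eq_zero_iff.mp hC0'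
        have : ∀ ω, (∑ j ∈ J, c j * N j ω) = 0 := by
          intro ω
          refine Finset.sum_eq_zero fun j hj => ?_
          rw [hcj j hj, zero_mul]
        calc ∫⁻ ω, (∑ j ∈ J, c j * N j ω) ^ l ∂volume
            = ∫⁻ _ω, 0 ∂volume := by
              refine lintegral_congr fun ω => ?_
              rw [this ω, zero_pow hl']
        _ = 0 := lintegral_zero
        _ ≤ _ := zero_le
      · have hCtop : C ≠ ⊤ := by
          rw [hCofReal]; exact ENNReal.ofReal_ne_top
        set w : ℕ → ENNReal := fun j => c j / C with hw
        have hwsum : ∑ j ∈ J, w j = 1 := by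
          have h1 : ∑ j ∈ J, w j = (∑ j ∈ J, c j) * C⁻¹ := by
            rw [Finset.sum_mul]
            exact Finset.sum_congr rfl fun j _ => div_eq_mul_inv _ _
          rw [h1, ← hC, ENNReal.mul_inv_cancel hC0 hCtop]
        have hdecomp : ∀ ω, (∑ j ∈ J, c j * N j ω) = C * ∑ j ∈ J, w j * N j ω := by
          intro ω
          rw [Finset.mul_sum]
          refine Finset.sum_congr rfl fun j _ => ?_
          rw [hw]
          simp only
          rw [← mul_assoc, mul_comm C (c j / C), ENNReal.div_mul_cancel hC0 hCtop]
        have hjensen : ∀ ω, (∑ j ∈ J, w j * N j ω) ^ l ≤ ∑ j ∈ J, w j * N j ω ^ l := by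
          intro ω
          have h := ENNReal.rpow_arith_mean_le_arith_mean_rpow J w (fun j => N j ω) hwsum
            (p := (l : ℝ)) (by exact_mod_cast hl)
          simpa only [ENNReal.rpow_natCast] using h
        calc ∫⁻ ω, (∑ j ∈ J, c j * N j ω) ^ l ∂volume
            = ∫⁻ ω, C ^ l * (∑ j ∈ J, w j * N j ω) ^ l ∂volume := by
              refine lintegral_congr fun ω => ?_
              rw [hdecomp ω, mul_pow]
        _ ≤ ∫⁻ ω, C ^ l * (∑ j ∈ J, w j * N j ω ^ l) ∂volume :=
              lintegral_mono fun ω => mul_le_mul_right (hjensen ω) _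
        _ = C ^ l * ∑ j ∈ J, w j * ∫⁻ ω, N j ω ^ l ∂volume := by
              rw [lintegral_const_mul _ (Finset.measurable_sum _ fun j _ =>
                (((hNmeas j).pow_const l).const_mul _))]
              congr 1
              rw [lintegral_finset_sum _ fun j _ =>
                ((hNmeas j).pow_const l).const_mul _]
              refine Finset.sum_congr rfl fun j _ => ?_
              rw [lintegral_const_mul _ ((hNmeas j).pow_const l)]
        _ ≤ C ^ l * ∑ j ∈ J, w j * ∫⁻ ω, NN ω ^ l ∂volume := by
              refine mul_le_mul_right (Finset.sum_le_sum fun j _ => ?_) _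
              refine mul_le_mul_right ?_ _
              exact rsn_lemmaB hξmeas hξpos hindep hid hS (t - j - 1) l
        _ = C ^ l * ∫⁻ ω, NN ω ^ l ∂volume := by
              rw [← Finset.sum_mul, hwsum, one_mul]
end

section
/- For any c > 0 and any fixed δ > 0, almost surely lim_{n→∞} n^{-c} ( ν(n) − ν(n − δ) ) = 0. -/
open MeasureTheory ProbabilityTheory Filter Set

/-- **Lemma 4(b).** Let `(ξ k)` be i.i.d. copies of a positive random variable,
`S n = ξ 0 + … + ξ (n-1)` and `ν x = #{k ≥ 0 : S k ≤ x}`. For any `c > 0` and any fixed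
`δ > 0`, almost surely `n^{-c} (ν n - ν (n - δ)) → 0`. -/
theorem renewal_increment_negligible
    {Ω : Type*} [MeasureSpace Ω] [IsProbabilityMeasure (volume : Measure Ω)]
    (ξ : ℕ → Ω → ℝ)
    (hξmeas : ∀ k, Measurable (ξ k))
    (hξpos : ∀ k ω, 0 < ξ k ω)
    (hindep : iIndepFun (m := fun _ : ℕ => Real.measurableSpace) ξ volume)
    (hid : ∀ k, IdentDistrib (ξ k) (ξ 0) volume volume)
    (S : ℕ → Ω → ℝ) (hS : ∀ n ω, S n ω = ∑ i ∈ Finset.range n, ξ i ω)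
    (ν : ℝ → Ω → ℝ)
    (hν : ∀ x ω, ν x ω = ∑' k : ℕ, (if S k ω ≤ x then (1 : ℝ) else 0))
    (c : ℝ) (hc : 0 < c) (δ : ℝ) (hδ : 0 < δ) :
    ∀ᵐ ω ∂(volume : Measure Ω),
      Tendsto (fun n : ℕ => ((n : ℝ) ^ (-c)) * (ν n ω - ν ((n : ℝ) - δ) ω))
        atTop (nhds 0) := by
  classical
  set μ : Measure Ω := volume with hμdef
  -- integrability of exp(-ξ k)
  have hint : ∀ k, Integrable (fun ω => Real.exp (-1 * ξ k ω)) μ := by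
    intro k
    refine (integrable_const (1:ℝ)).mono'
      (((hξmeas k).const_mul (-1)).exp).aestronglyMeasurable ?_
    filter_upwards with ω
    rw [Real.norm_eq_abs, abs_of_nonneg (Real.exp_nonneg _)]
    exact Real.exp_le_one_iff.mpr (by nlinarith [hξpos k ω])
  set ρ : ℝ := mgf (ξ 0) μ (-1) with hρdef
  have hρpos : 0 < ρ := mgf_pos (hint 0)
  have hρlt : ρ < 1 := by
    have key : 0 < ∫ ω, (1 - Real.exp (-1 * ξ 0 ω)) ∂μ := by
      rw [integral_pos_iff_support_of_nonneg]
      · have hu : (Function.support fun ω => 1 - Real.exp (-1 * ξ 0 ω)) = Set.univ := by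
          ext ω
          simp only [Function.mem_support, Set.mem_univ, iff_true]
          have : Real.exp (-1 * ξ 0 ω) < 1 := Real.exp_lt_one_iff.mpr (by nlinarith [hξpos 0 ω])
          intro h; nlinarith
        rw [hu]; simp
      · intro ω
        have : Real.exp (-1 * ξ 0 ω) < 1 := Real.exp_lt_one_iff.mpr (by nlinarith [hξpos 0 ω])
        dsimp; linarith
      · exact (integrable_const (1:ℝ)).sub (hint 0)
    have h2 : ∫ ω, (1 - Real.exp (-1 * ξ 0 ω)) ∂μ = 1 - ∫ ω, Real.exp (-1 * ξ 0 ω) ∂μ := by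
      rw [integral_sub (integrable_const 1) (hint 0)]; simp
    rw [h2] at key
    have : ρ = ∫ ω, Real.exp (-1 * ξ 0 ω) ∂μ := rfl
    linarith [this ▸ key]
  -- Chernoff bound for sums over finite index sets
  have chernoff : ∀ (F : Finset ℕ) (x : ℝ),
      μ {ω | ∑ i ∈ F, ξ i ω ≤ x} ≤ ENNReal.ofReal (Real.exp x * ρ ^ F.card) := by
    intro F x
    have hmgf_eq : ∀ k, mgf (ξ k) μ (-1) = ρ := by
      intro k
      have h := ((hid k).comp
        (Real.measurable_exp.comp (measurable_const_mul (-1)))).integral_eq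
      simp only [hρdef, mgf, Function.comp] at h ⊢
      exact h
    have hsum_int : Integrable (fun ω => Real.exp (-1 * (∑ i ∈ F, ξ i) ω)) μ :=
      hindep.integrable_exp_mul_sum hξmeas (fun i _ => hint i)
    have h1 := measure_le_le_exp_mul_mgf (μ := μ) (X := ∑ i ∈ F, ξ i) x
      (by norm_num : (-1:ℝ) ≤ 0) hsum_int
    rw [hindep.mgf_sum hξmeas F] at h1
    have h2 : ∏ i ∈ F, mgf (ξ i) μ (-1) = ρ ^ F.card := by
      rw [Finset.prod_congr rfl fun i _ => hmgf_eq i, Finset.prod_const]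
    rw [h2] at h1
    have hset : {ω | (∑ i ∈ F, ξ i) ω ≤ x} = {ω | ∑ i ∈ F, ξ i ω ≤ x} := by
      simp [Finset.sum_apply]
    rw [hset] at h1
    calc μ {ω | ∑ i ∈ F, ξ i ω ≤ x}
        = ENNReal.ofReal (μ {ω | ∑ i ∈ F, ξ i ω ≤ x}).toReal :=
          (ENNReal.ofReal_toReal (measure_ne_top _ _)).symm
      _ ≤ _ := by
          apply ENNReal.ofReal_le_ofReal
          simpa [measureReal_def] using h1
  set L : ℝ := -Real.log ρ with hLdef
  have hL : 0 < L := by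
    have := Real.log_neg hρpos hρlt; simp only [hLdef]; linarith
  have hρ_exp : ∀ j : ℕ, ρ ^ j = Real.exp (-(L * j)) := by
    intro j
    rw [← Real.exp_log hρpos, ← Real.exp_nat_mul]
    congr 1
    simp only [hLdef]; ring
  -- the window length and the cutoff index
  set m : ℕ → ℕ := fun n => ⌈(3 / L) * Real.log n⌉₊ with hmdef
  set k₀ : ℕ → ℕ := fun n => ⌈((n : ℝ) + 2 * Real.log n) / L⌉₊ with hk₀def
  -- the events
  set A : ℕ → ℕ → Set Ω := fun k n => {ω | S k ω ≤ (n : ℝ)} with hAdef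
  set B : ℕ → ℕ → Set Ω :=
    fun k n => {ω | ∑ i ∈ Finset.Ico k (k + m n), ξ i ω ≤ δ} with hBdef
  set C : ℕ → Set Ω :=
    fun n => (⋃ k ∈ Finset.range (k₀ n + 1), B k n) ∪ ⋃ j : ℕ, A (k₀ n + 1 + j) n with hCdef
  have hA : ∀ k n, μ (A k n) ≤ ENNReal.ofReal (Real.exp n * ρ ^ k) := by
    intro k n
    have hset : A k n = {ω | ∑ i ∈ Finset.range k, ξ i ω ≤ (n : ℝ)} := by
      ext ω; simp only [hAdef, Set.mem_setOf_eq, hS]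
    rw [hset]
    simpa [Finset.card_range] using chernoff (Finset.range k) (n : ℝ)
  have hB : ∀ k n, μ (B k n) ≤ ENNReal.ofReal (Real.exp δ * ρ ^ m n) := by
    intro k n
    simpa [Nat.card_Ico] using chernoff (Finset.Ico k (k + m n)) δ
  -- geometric tail computation
  have geom_tail : ∀ (a : ℝ), 0 ≤ a →
      (∑' j : ℕ, ENNReal.ofReal (a * ρ ^ j)) = ENNReal.ofReal (a * (1 - ρ)⁻¹) := by
    intro a ha
    rw [← ENNReal.ofReal_tsum_of_nonneg (fun j => by positivity)
      ((summable_geometric_of_lt_one hρpos.le hρlt).mul_left a)]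
    rw [tsum_mul_left, tsum_geometric_of_lt_one hρpos.le hρlt]
  -- bound on μ (C n)
  set g : ℕ → ℝ := fun n =>
    ((k₀ n : ℝ) + 1) * (Real.exp δ * ρ ^ m n) + Real.exp n * ρ ^ (k₀ n + 1) * (1 - ρ)⁻¹
    with hgdef
  have hC : ∀ n, μ (C n) ≤ ENNReal.ofReal (g n) := by
    intro n
    have h1 : μ (⋃ k ∈ Finset.range (k₀ n + 1), B k n)
        ≤ ENNReal.ofReal (((k₀ n : ℝ) + 1) * (Real.exp δ * ρ ^ m n)) := by
      refine (measure_biUnion_finset_le _ _).trans ?_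
      calc ∑ k ∈ Finset.range (k₀ n + 1), μ (B k n)
          ≤ ∑ _k ∈ Finset.range (k₀ n + 1), ENNReal.ofReal (Real.exp δ * ρ ^ m n) :=
            Finset.sum_le_sum fun k _ => hB k n
        _ = (k₀ n + 1) • ENNReal.ofReal (Real.exp δ * ρ ^ m n) := by
            rw [Finset.sum_const, Finset.card_range]
        _ = ENNReal.ofReal (((k₀ n : ℝ) + 1) * (Real.exp δ * ρ ^ m n)) := by
            rw [nsmul_eq_mul, ← ENNReal.ofReal_natCast (k₀ n + 1),
              ← ENNReal.ofReal_mul (by positivity)]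
            push_cast
            ring_nf
    have h2 : μ (⋃ j : ℕ, A (k₀ n + 1 + j) n)
        ≤ ENNReal.ofReal (Real.exp n * ρ ^ (k₀ n + 1) * (1 - ρ)⁻¹) := by
      refine (measure_iUnion_le _).trans ?_
      calc (∑' j : ℕ, μ (A (k₀ n + 1 + j) n))
          ≤ ∑' j : ℕ, ENNReal.ofReal (Real.exp n * ρ ^ (k₀ n + 1) * ρ ^ j) := by
            refine ENNReal.tsum_le_tsum fun j => ?_
            have := hA (k₀ n + 1 + j) n
            rwa [pow_add, ← mul_assoc] at this
        _ = ENNReal.ofReal (Real.exp n * ρ ^ (k₀ n + 1) * (1 - ρ)⁻¹) :=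
            geom_tail _ (by positivity)
    have hg_eq : g n = ((k₀ n : ℝ) + 1) * (Real.exp δ * ρ ^ m n)
        + Real.exp n * ρ ^ (k₀ n + 1) * (1 - ρ)⁻¹ := rfl
    calc μ (C n) ≤ μ (⋃ k ∈ Finset.range (k₀ n + 1), B k n)
          + μ (⋃ j : ℕ, A (k₀ n + 1 + j) n) := measure_union_le _ _
      _ ≤ _ := by
          have h0 : (0:ℝ) < 1 - ρ := by linarith
          rw [hg_eq, ENNReal.ofReal_add (by positivity) (by positivity)]
          exact add_le_add h1 h2
  -- the bound g n is summable
  have hgsum : Summable g := by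
    set K : ℝ := (3 / L + 2) * Real.exp δ + (1 - ρ)⁻¹ with hKdef
    have hbound : ∀ n : ℕ, 1 ≤ n → g n ≤ K * (((n : ℝ)) ^ 2)⁻¹ := by
      intro n hn
      have hx1 : (1 : ℝ) ≤ (n : ℝ) := by exact_mod_cast hn
      have hxpos : (0 : ℝ) < (n : ℝ) := by linarith
      have hlog0 : 0 ≤ Real.log n := Real.log_nonneg hx1
      have hlogn : Real.log n ≤ (n : ℝ) := by
        have := Real.log_le_sub_one_of_pos hxpos; linarith
      -- bound on ρ ^ m n
      have hb1 : ρ ^ m n ≤ (((n : ℝ)) ^ 3)⁻¹ := by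
        have h1 : (3 / L) * Real.log n ≤ (m n : ℝ) := Nat.le_ceil _
        have h2 : 3 * Real.log n ≤ L * m n := by
          have := mul_le_mul_of_nonneg_left h1 hL.le
          calc 3 * Real.log n = L * ((3 / L) * Real.log n) := by field_simp
            _ ≤ L * m n := this
        have h3 : ρ ^ m n ≤ Real.exp (-(3 * Real.log n)) := by
          rw [hρ_exp]; exact Real.exp_le_exp.mpr (by linarith)
        have h4 : Real.exp (-(3 * Real.log n)) = (((n : ℝ)) ^ 3)⁻¹ := by
          rw [Real.exp_neg]
          congr 1
          rw [show (3 : ℝ) * Real.log n = ((3 : ℕ) : ℝ) * Real.log n by norm_num,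
            Real.exp_nat_mul, Real.exp_log hxpos]
        linarith [h4 ▸ h3]
      -- bound on exp n * ρ ^ (k₀ n + 1)
      have hb2 : Real.exp n * ρ ^ (k₀ n + 1) ≤ (((n : ℝ)) ^ 2)⁻¹ := by
        have h1 : ((n : ℝ) + 2 * Real.log n) / L ≤ (k₀ n : ℝ) := Nat.le_ceil _
        have h2 : (n : ℝ) + 2 * Real.log n ≤ L * (k₀ n + 1) := by
          have := mul_le_mul_of_nonneg_left h1 hL.le
          have heq : L * (((n : ℝ) + 2 * Real.log n) / L) = (n : ℝ) + 2 * Real.log n := by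
            field_simp
          nlinarith [hL.le]
        have h3 : Real.exp n * ρ ^ (k₀ n + 1)
            ≤ Real.exp ((n : ℝ) + -(L * (k₀ n + 1))) := by
          rw [hρ_exp, ← Real.exp_add]
          push_cast
          exact le_of_eq rfl
        have h4 : Real.exp ((n : ℝ) + -(L * (k₀ n + 1))) ≤ Real.exp (-(2 * Real.log n)) := by
          apply Real.exp_le_exp.mpr
          push_cast at h2 ⊢
          linarith
        have h5 : Real.exp (-(2 * Real.log n)) = (((n : ℝ)) ^ 2)⁻¹ := by
          rw [Real.exp_neg]
          congr 1
          rw [show (2 : ℝ) * Real.log n = ((2 : ℕ) : ℝ) * Real.log n by norm_num,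
            Real.exp_nat_mul, Real.exp_log hxpos]
        linarith [h5 ▸ h4, h3]
      -- bound on k₀ n + 1
      have hb3 : (k₀ n : ℝ) + 1 ≤ (3 / L + 2) * (n : ℝ) := by
        have h1 : (k₀ n : ℝ) < ((n : ℝ) + 2 * Real.log n) / L + 1 :=
          Nat.ceil_lt_add_one (by positivity)
        have h2 : ((n : ℝ) + 2 * Real.log n) / L ≤ 3 * (n : ℝ) / L := by
          gcongr
          linarith
        have h3 : (2 : ℝ) ≤ 2 * (n : ℝ) := by linarith
        have : (k₀ n : ℝ) + 1 ≤ 3 * (n : ℝ) / L + 2 := by linarith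
        calc (k₀ n : ℝ) + 1 ≤ 3 * (n : ℝ) / L + 2 := this
          _ ≤ 3 * (n : ℝ) / L + 2 * (n : ℝ) := by linarith
          _ = (3 / L + 2) * (n : ℝ) := by ring
      have hterm1 : ((k₀ n : ℝ) + 1) * (Real.exp δ * ρ ^ m n)
          ≤ (3 / L + 2) * Real.exp δ * (((n : ℝ)) ^ 2)⁻¹ := by
        calc ((k₀ n : ℝ) + 1) * (Real.exp δ * ρ ^ m n)
            ≤ ((3 / L + 2) * (n : ℝ)) * (Real.exp δ * (((n : ℝ)) ^ 3)⁻¹) := by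
              apply mul_le_mul hb3 ?_ (by positivity) (by positivity)
              exact mul_le_mul_of_nonneg_left hb1 (Real.exp_nonneg δ)
          _ = (3 / L + 2) * Real.exp δ * ((n : ℝ) * (((n : ℝ)) ^ 3)⁻¹) := by ring
          _ = (3 / L + 2) * Real.exp δ * (((n : ℝ)) ^ 2)⁻¹ := by
              congr 1
              field_simp
      have hterm2 : Real.exp n * ρ ^ (k₀ n + 1) * (1 - ρ)⁻¹
          ≤ (((n : ℝ)) ^ 2)⁻¹ * (1 - ρ)⁻¹ := by
        apply mul_le_mul_of_nonneg_right hb2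
        have : (0:ℝ) < 1 - ρ := by linarith
        positivity
      calc g n ≤ (3 / L + 2) * Real.exp δ * (((n : ℝ)) ^ 2)⁻¹
            + (((n : ℝ)) ^ 2)⁻¹ * (1 - ρ)⁻¹ := add_le_add hterm1 hterm2
        _ = K * (((n : ℝ)) ^ 2)⁻¹ := by rw [hKdef]; ring
    -- conclude summability
    rw [← summable_nat_add_iff 1]
    have hKsum : Summable (fun n : ℕ => K * ((((n + 1 : ℕ)) : ℝ) ^ 2)⁻¹) := by
      have base : Summable (fun n : ℕ => (((n : ℝ)) ^ 2)⁻¹) := by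
        simpa [one_div] using summable_one_div_nat_pow.mpr (by norm_num : 1 < 2)
      exact ((summable_nat_add_iff 1).mpr base).mul_left K
    refine Summable.of_nonneg_of_le (fun n => ?_) (fun n => ?_) hKsum
    · have h1 : (0:ℝ) < 1 - ρ := by linarith
      rw [hgdef]; positivity
    · exact hbound (n + 1) (by omega)
  -- Borel-Cantelli for C
  have hBC : ∀ᵐ ω ∂μ, {n : ℕ | ω ∈ C n}.Finite := by
    apply ae_finite_setOf_mem
    have h1 : (∑' n, μ (C n)) ≤ ∑' n, ENNReal.ofReal (g n) := ENNReal.tsum_le_tsum hC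
    have h2 : (∑' n, ENNReal.ofReal (g n)) ≠ ⊤ := by
      rw [← ENNReal.ofReal_tsum_of_nonneg (fun n => ?_) hgsum]
      · exact ENNReal.ofReal_ne_top
      · have h1 : (0:ℝ) < 1 - ρ := by linarith
        rw [hgdef]; positivity
    exact ne_top_of_le_ne_top h2 h1
  -- Borel-Cantelli for finiteness of renewal counts
  have hfin_ae : ∀ᵐ ω ∂μ, ∀ n : ℕ, {k : ℕ | S k ω ≤ (n : ℝ)}.Finite := by
    rw [ae_all_iff]
    intro n
    apply ae_finite_setOf_mem (s := fun k => A k n)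
    have h1 : (∑' k, μ (A k n)) ≤ ∑' k, ENNReal.ofReal (Real.exp n * ρ ^ k) :=
      ENNReal.tsum_le_tsum (fun k => hA k n)
    rw [geom_tail _ (Real.exp_nonneg _)] at h1
    exact ne_top_of_le_ne_top ENNReal.ofReal_ne_top h1
  -- combine and conclude pointwise
  filter_upwards [hBC, hfin_ae] with ω hev hfin
  -- counting formula for ν
  have hνcard : ∀ (x : ℝ) (hf : Set.Finite {k : ℕ | S k ω ≤ x}),
      ν x ω = (hf.toFinset.card : ℝ) := by
    intro x hf
    rw [hν]
    rw [tsum_eq_sum (s := hf.toFinset) (fun k hk => by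
      rw [if_neg]; simpa using hk)]
    rw [Finset.sum_congr rfl (fun k hk => if_pos (by simpa using hk))]
    rw [Finset.sum_const, nsmul_eq_mul, mul_one]
  -- eventual bound on the increment
  obtain ⟨N, hN⟩ : ∃ N : ℕ, ∀ n ≥ N, ω ∉ C n := by
    have := hev.eventually_cofinite_notMem
    rw [Nat.cofinite_eq_atTop, eventually_atTop] at this
    exact this
  have key : ∀ n : ℕ, max N 1 ≤ n →
      0 ≤ ν n ω - ν ((n : ℝ) - δ) ω ∧
      ν n ω - ν ((n : ℝ) - δ) ω ≤ (m n : ℝ) := by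
    intro n hn
    have hn1 : 1 ≤ n := le_trans (le_max_right _ _) hn
    have hnN : N ≤ n := le_trans (le_max_left _ _) hn
    have hfn : Set.Finite {k : ℕ | S k ω ≤ (n : ℝ)} := hfin n
    have hfd : Set.Finite {k : ℕ | S k ω ≤ (n : ℝ) - δ} :=
      hfn.subset (fun k hk => by simp only [Set.mem_setOf_eq] at hk ⊢; linarith)
    have hsub : hfd.toFinset ⊆ hfn.toFinset := by
      intro k hk
      simp only [Set.Finite.mem_toFinset, Set.mem_setOf_eq] at hk ⊢
      linarith
    have hdiff : ν n ω - ν ((n : ℝ) - δ) ω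
        = ((hfn.toFinset \ hfd.toFinset).card : ℝ) := by
      rw [hνcard _ hfn, hνcard _ hfd, Finset.card_sdiff_of_subset hsub]
      rw [Nat.cast_sub (Finset.card_le_card hsub)]
    constructor
    · rw [hdiff]; exact Nat.cast_nonneg _
    · rw [hdiff]
      norm_cast
      by_contra hcon
      push_neg at hcon
      set G : Finset ℕ := hfn.toFinset \ hfd.toFinset with hGdef
      have hGne : G.Nonempty := Finset.card_pos.mp (by omega)
      set a : ℕ := G.min' hGne with hadef
      set b : ℕ := G.max' hGne with hbdef
      have haG : a ∈ G := G.min'_mem hGne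
      have hbG : b ∈ G := G.max'_mem hGne
      have hab : a ≤ b := G.min'_le b hbG
      have hmem : ∀ k ∈ G, (n : ℝ) - δ < S k ω ∧ S k ω ≤ (n : ℝ) := by
        intro k hk
        rw [hGdef, Finset.mem_sdiff, Set.Finite.mem_toFinset, Set.Finite.mem_toFinset] at hk
        simp only [Set.mem_setOf_eq] at hk
        exact ⟨by linarith [not_le.mp hk.2], hk.1⟩
      have hGsub : G ⊆ Finset.Icc a b :=
        fun x hx => Finset.mem_Icc.mpr ⟨G.min'_le x hx, G.le_max' x hx⟩
      have hcard : m n + 1 ≤ b + 1 - a := by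
        calc m n + 1 ≤ G.card := by omega
          _ ≤ (Finset.Icc a b).card := Finset.card_le_card hGsub
          _ = b + 1 - a := Nat.card_Icc a b
      have hba : a + m n ≤ b := by omega
      -- the sum of ξ over [a, a + m n) is at most δ
      have hsum : ∑ i ∈ Finset.Ico a (a + m n), ξ i ω ≤ δ := by
        have h1 : ∑ i ∈ Finset.Ico a b, ξ i ω = S b ω - S a ω := by
          rw [hS, hS]
          exact Finset.sum_Ico_eq_sub _ hab
        have h2 : ∑ i ∈ Finset.Ico a (a + m n), ξ i ω ≤ ∑ i ∈ Finset.Ico a b, ξ i ω := by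
          apply Finset.sum_le_sum_of_subset_of_nonneg
          · exact Finset.Ico_subset_Ico le_rfl hba
          · intro i _ _; exact (hξpos i ω).le
        obtain ⟨h3a, h3b⟩ := hmem a haG
        obtain ⟨h4a, h4b⟩ := hmem b hbG
        rw [h1] at h2
        linarith
      -- so ω ∈ C n, contradiction
      apply hN n hnN
      rw [hCdef]
      rcases le_or_gt a (k₀ n) with hak | hak
      · left
        apply Set.mem_biUnion (show a ∈ Finset.range (k₀ n + 1) from
          Finset.mem_range.mpr (by omega))
        exact hsum
      · right
        apply Set.mem_iUnion.mpr
        refine ⟨a - (k₀ n + 1), ?_⟩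
        have : k₀ n + 1 + (a - (k₀ n + 1)) = a := by omega
        rw [this]
        exact (hmem a haG).2
  -- the squeeze
  have hub : Tendsto (fun n : ℕ => ((n : ℝ) ^ (-c)) * ((3 / L) * Real.log n + 2))
      atTop (nhds 0) := by
    have t1 : Tendsto (fun n : ℕ => Real.log n * ((n : ℝ) ^ (-c))) atTop (nhds 0) := by
      have := (isLittleO_log_rpow_atTop hc).tendsto_div_nhds_zero
      have h2 := this.comp (tendsto_natCast_atTop_atTop (R := ℝ))
      apply h2.congr
      intro n
      simp only [Function.comp_apply]
      rw [div_eq_mul_inv, ← Real.rpow_neg (Nat.cast_nonneg n)]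
    have t2 : Tendsto (fun n : ℕ => ((n : ℝ) ^ (-c))) atTop (nhds 0) :=
      (tendsto_rpow_neg_atTop hc).comp (tendsto_natCast_atTop_atTop (R := ℝ))
    have := ((t1.const_mul (3 / L)).add (t2.const_mul 2))
    simp only [mul_zero, add_zero, zero_add] at this
    apply this.congr
    intro n
    ring
  apply tendsto_of_tendsto_of_tendsto_of_le_of_le' tendsto_const_nhds hub
  · filter_upwards [eventually_ge_atTop (max N 1)] with n hn
    have h := (key n hn).1
    have hr : (0:ℝ) ≤ (n : ℝ) ^ (-c) := Real.rpow_nonneg (Nat.cast_nonneg n) _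
    positivity
  · filter_upwards [eventually_ge_atTop (max N 1)] with n hn
    have hn1 : 1 ≤ n := le_trans (le_max_right _ _) hn
    have h := (key n hn).2
    have hr : (0:ℝ) ≤ (n : ℝ) ^ (-c) := Real.rpow_nonneg (Nat.cast_nonneg n) _
    have hm_le : (m n : ℝ) ≤ (3 / L) * Real.log n + 2 := by
      have h1 : (m n : ℝ) < (3 / L) * Real.log n + 1 := by
        apply Nat.ceil_lt_add_one
        have : (1:ℝ) ≤ (n:ℝ) := by exact_mod_cast hn1
        have := Real.log_nonneg this
        positivity
      linarith
    calc ((n : ℝ) ^ (-c)) * (ν n ω - ν ((n : ℝ) - δ) ω)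
        ≤ ((n : ℝ) ^ (-c)) * (m n : ℝ) := by
          apply mul_le_mul_of_nonneg_left h hr
      _ ≤ ((n : ℝ) ^ (-c)) * ((3 / L) * Real.log n + 2) :=
          mul_le_mul_of_nonneg_left hm_le hr
end
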